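/- arXiv:2109.00613 — 7 statements merged into one kernel-verified Lean document; each statement's English description precedes it below -/
import Mathlib

section
/- Let n, w be natural numbers with w ≤ n and let D be a set of natural numbers. Let C and A be families of w-element subsets of Fin n such that the Johnson distance between any two distinct members of C lies in D. Let m be the maximum cardinality of a subfamily C' of A such that the Johnson distance between any two distinct members of C' lies in D. Then |C| · |A| ≤ m · C(n,w), where C(n,w) is the binomial coefficient. -/
open Finset

private lemma exists_perm_image {n : ℕ} (a a' : Finset (Fin n)) (h : a.card = a'.card) :
    ∃ σ : Equiv.Perm (Fin n), a.image σ = a' := by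
  classical
  have e : {x // x ∈ a} ≃ {x // x ∈ a'} :=
    Fintype.equivOfCardEq (by simp [Fintype.card_coe, h])
  refine ⟨e.extendSubtype, ?_⟩
  apply Finset.eq_of_subset_of_card_le
  · intro x hx
    simp only [Finset.mem_image] at hx
    obtain ⟨y, hy, rfl⟩ := hx
    exact e.extendSubtype_mem y hy
  · rw [Finset.card_image_of_injective _ (Equiv.injective _), h]

private lemma image_sdiff_card {n : ℕ} (σ : Equiv.Perm (Fin n)) (B₁ B₂ : Finset (Fin n)) :
    ((B₁.image σ) \ (B₂.image σ)).card = (B₁ \ B₂).card := by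
  classical
  rw [← Finset.image_sdiff _ _ (Equiv.injective σ),
    Finset.card_image_of_injective _ (Equiv.injective σ)]

private def N {n : ℕ} (c a : Finset (Fin n)) : ℕ :=
  (Finset.univ.filter (fun g : Equiv.Perm (Fin n) => c.image g = a)).card

private lemma N_const {n w : ℕ} {c a a' : Finset (Fin n)}
    (ha : a.card = w) (ha' : a'.card = w) : N c a = N c a' := by
  classical
  obtain ⟨σ, hσ⟩ := exists_perm_image a a' (ha.trans ha'.symm)
  refine Finset.card_bij' (fun g _ => σ * g) (fun g _ => σ⁻¹ * g) ?_ ?_ ?_ ?_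
  · intro g hg
    simp only [Finset.mem_filter, Finset.mem_univ, true_and] at hg ⊢
    rw [Equiv.Perm.coe_mul, ← Finset.image_image, hg, hσ]
  · intro g hg
    simp only [Finset.mem_filter, Finset.mem_univ, true_and] at hg ⊢
    rw [Equiv.Perm.coe_mul, ← Finset.image_image, hg, ← hσ,
      Finset.image_image]
    ext x
    simp
  · intro g _; simp [mul_assoc]
  · intro g _; simp [mul_assoc]

private lemma N_mul_choose {n w : ℕ} {c a : Finset (Fin n)}
    (hc : c.card = w) (ha : a.card = w) :
    N c a * Nat.choose n w = Nat.factorial n := by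
  classical
  have key : (Finset.univ : Finset (Equiv.Perm (Fin n))).card =
      ∑ a' ∈ Finset.powersetCard w (Finset.univ : Finset (Fin n)), N c a' := by
    apply Finset.card_eq_sum_card_fiberwise
    intro g _
    simp only [Finset.mem_coe]
    rw [Finset.mem_powersetCard_univ, Finset.card_image_of_injective _ (Equiv.injective g), hc]
  have const : ∀ a' ∈ Finset.powersetCard w (Finset.univ : Finset (Fin n)),
      N c a' = N c a := by
    intro a' ha'
    exact N_const (Finset.mem_powersetCard_univ.1 ha') ha
  rw [Finset.sum_congr rfl const, Finset.sum_const, Finset.card_powersetCard] at key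
  simp only [Finset.card_univ, Fintype.card_fin, Fintype.card_perm, smul_eq_mul] at key
  rw [mul_comm, ← key]

/-- Local inequality (code-anticode) bound in the Johnson scheme J(n,w):
words of length `n` and weight `w` are identified with `w`-element subsets of `Fin n`,
and the Johnson distance between subsets `B₁` and `B₂` is `(B₁ \ B₂).card`. -/
theorem local_inequality_johnson (n w : ℕ) (hw : w ≤ n) (D : Set ℕ)
    (C A : Finset (Finset (Fin n)))
    (hC : ∀ B ∈ C, B.card = w) (hA : ∀ B ∈ A, B.card = w)
    (hCD : ∀ B₁ ∈ C, ∀ B₂ ∈ C, B₁ ≠ B₂ → (B₁ \ B₂).card ∈ D)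
    (m : ℕ)
    (hm : IsGreatest {k : ℕ | ∃ C' : Finset (Finset (Fin n)), C' ⊆ A ∧
      (∀ B₁ ∈ C', ∀ B₂ ∈ C', B₁ ≠ B₂ → (B₁ \ B₂).card ∈ D) ∧ C'.card = k} m) :
    C.card * A.card ≤ m * Nat.choose n w := by
  classical
  -- the translated code condition
  set S : ℕ := ∑ g : Equiv.Perm (Fin n), ((C.image (fun B => B.image g)) ∩ A).card with hS
  -- each summand is at most m
  have hterm : ∀ g : Equiv.Perm (Fin n), ((C.image (fun B => B.image g)) ∩ A).card ≤ m := by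
    intro g
    apply hm.2
    refine ⟨(C.image (fun B => B.image g)) ∩ A, Finset.inter_subset_right, ?_, rfl⟩
    intro B₁ hB₁ B₂ hB₂ hne
    obtain ⟨c₁, hc₁, rfl⟩ := Finset.mem_image.1 (Finset.mem_of_mem_inter_left hB₁)
    obtain ⟨c₂, hc₂, rfl⟩ := Finset.mem_image.1 (Finset.mem_of_mem_inter_left hB₂)
    have hcne : c₁ ≠ c₂ := fun h => hne (by rw [h])
    rw [image_sdiff_card]
    exact hCD c₁ hc₁ c₂ hc₂ hcne
  have hSle : S ≤ Nat.factorial n * m := by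
    calc S ≤ ∑ _g : Equiv.Perm (Fin n), m := Finset.sum_le_sum fun g _ => hterm g
    _ = Nat.factorial n * m := by
      rw [Finset.sum_const, Finset.card_univ, Fintype.card_perm, Fintype.card_fin, smul_eq_mul]
  -- compute S by double counting
  obtain hCempty | ⟨c₀, hc₀⟩ := C.eq_empty_or_nonempty.symm.symm
  · simp [hCempty]
  obtain hAempty | ⟨a₀, ha₀⟩ := A.eq_empty_or_nonempty.symm.symm
  · simp [hAempty]
  have hSeq : S = C.card * A.card * N c₀ a₀ := by
    have step1 : ∀ g : Equiv.Perm (Fin n), ((C.image (fun B => B.image g)) ∩ A).card =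
        ∑ a ∈ A, if a ∈ C.image (fun B => B.image g) then 1 else 0 := by
      intro g
      rw [Finset.sum_boole]
      congr 1
      ext x
      simp only [Finset.mem_filter, Finset.mem_inter]
      tauto
    rw [hS]
    simp_rw [step1]
    rw [Finset.sum_comm]
    have step2 : ∀ a ∈ A, (∑ g : Equiv.Perm (Fin n),
        if a ∈ C.image (fun B => B.image g) then 1 else 0) = ∑ c ∈ C, N c a := by
      intro a ha
      rw [Finset.sum_boole]
      have : (Finset.univ.filter (fun g : Equiv.Perm (Fin n) =>
          a ∈ C.image (fun B => B.image g))) =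
          C.biUnion (fun c => Finset.univ.filter (fun g : Equiv.Perm (Fin n) =>
            c.image g = a)) := by
        ext g
        simp only [Finset.mem_filter, Finset.mem_univ, true_and, Finset.mem_biUnion,
          Finset.mem_image]
      rw [this, Finset.card_biUnion]
      · simp [N]
      · intro c₁ h₁ c₂ h₂ hne
        simp only [Finset.disjoint_left, Finset.mem_filter, Finset.mem_univ, true_and]
        rintro g hg1 hg2
        apply hne
        have := hg1.trans hg2.symm
        exact Finset.image_injective (Equiv.injective g) this
    rw [Finset.sum_congr rfl step2]
    have step3 : ∀ a ∈ A, ∀ c ∈ C, N c a = N c₀ a₀ := by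
      intro a ha c hc
      have h1 : N c a = N c a₀ := N_const (hA a ha) (hA a₀ ha₀)
      have h2 : N c a₀ * Nat.choose n w = N c₀ a₀ * Nat.choose n w := by
        rw [N_mul_choose (hC c hc) (hA a₀ ha₀), N_mul_choose (hC c₀ hc₀) (hA a₀ ha₀)]
      have hchoose : 0 < Nat.choose n w := Nat.choose_pos hw
      rw [h1]
      exact Nat.eq_of_mul_eq_mul_right hchoose h2
    calc (∑ a ∈ A, ∑ c ∈ C, N c a) = ∑ a ∈ A, ∑ c ∈ C, N c₀ a₀ := by
          refine Finset.sum_congr rfl fun a ha => Finset.sum_congr rfl fun c hc => step3 a ha c hc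
      _ = C.card * A.card * N c₀ a₀ := by
          simp [Finset.sum_const, mul_comm, mul_assoc, mul_left_comm]
  -- combine
  have hNmul : N c₀ a₀ * Nat.choose n w = Nat.factorial n :=
    N_mul_choose (hC c₀ hc₀) (hA a₀ ha₀)
  have key : C.card * A.card * Nat.factorial n ≤ m * Nat.choose n w * Nat.factorial n := by
    calc C.card * A.card * Nat.factorial n
        = C.card * A.card * (N c₀ a₀ * Nat.choose n w) := by rw [hNmul]
      _ = S * Nat.choose n w := by rw [hSeq]; ring
      _ ≤ Nat.factorial n * m * Nat.choose n w :=
          Nat.mul_le_mul_right _ hSle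
      _ = m * Nat.choose n w * Nat.factorial n := by ring
  exact Nat.le_of_mul_le_mul_right key (Nat.factorial_pos n)
end

section
/- Let n, w, D be natural numbers with w ≤ n. If C is a family of w-element subsets of Fin n such that any two distinct members have Johnson distance at least D+1, and A is a family of w-element subsets of Fin n such that any two members have Johnson distance at most D, then |C| · |A| ≤ C(n,w). -/
open Finset

lemma subtypeCongr_apply' {α} {p q : α → Prop} [DecidablePred p] [DecidablePred q]
    (e : { x // p x } ≃ { x // q x }) (f : { x // ¬p x } ≃ { x // ¬q x }) (x : α) :
    Equiv.subtypeCongr e f x = if h : p x then (e ⟨x, h⟩ : α) else (f ⟨x, h⟩ : α) := by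
  by_cases h : p x <;> simp [Equiv.subtypeCongr, h]

lemma card_fiber (n w : ℕ) (hw : w ≤ n) (a c : Finset (Fin n))
    (ha : a.card = w) (hc : c.card = w) :
    (Finset.univ.filter (fun π : Equiv.Perm (Fin n) => a.image π = c)).card
      = w.factorial * (n - w).factorial := by
  classical
  have E : {π : Equiv.Perm (Fin n) // a.image π = c} ≃
      ({ x // x ∈ a } ≃ { x // x ∈ c }) × ({ x // ¬ x ∈ a } ≃ { x // ¬ x ∈ c }) := by
    refine ⟨fun ⟨π, h⟩ => ?_, fun ⟨e, f⟩ => ⟨Equiv.subtypeCongr e f, ?_⟩, ?_, ?_⟩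
    · have hmem : ∀ x : Fin n, x ∈ a ↔ π x ∈ c := by
        intro x
        constructor
        · intro hx; rw [← h]; exact mem_image_of_mem _ hx
        · intro hx; rw [← h] at hx
          obtain ⟨y, hy, hxy⟩ := mem_image.1 hx
          rwa [← π.injective hxy]
      exact ⟨⟨fun x => ⟨π x, (hmem x).1 x.2⟩,
             fun y => ⟨π.symm y, by
               have := hmem (π.symm y); simp at this; exact this⟩,
             fun x => by simp, fun y => by simp⟩,
           ⟨fun x => ⟨π x, fun hx => x.2 ((hmem x).2 hx)⟩,
             fun y => ⟨π.symm y, fun hx => y.2 (by simpa using (hmem (π.symm y)).1 hx)⟩,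
             fun x => by simp, fun y => by simp⟩⟩
    · ext y
      simp only [mem_image]
      constructor
      · rintro ⟨x, hx, rfl⟩
        rw [subtypeCongr_apply', dif_pos hx]
        exact (e ⟨x, hx⟩).2
      · intro hy
        refine ⟨e.symm ⟨y, hy⟩, (e.symm ⟨y, hy⟩).2, ?_⟩
        rw [subtypeCongr_apply', dif_pos (e.symm ⟨y, hy⟩).2]
        simp
    · rintro ⟨π, h⟩
      ext x
      simp only [subtypeCongr_apply']
      split <;> rfl
    · rintro ⟨e, f⟩
      ext x
      · simp [subtypeCongr_apply', x.2]
      · simp [subtypeCongr_apply', x.2]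
  have h1 : (Finset.univ.filter (fun π : Equiv.Perm (Fin n) => a.image π = c)).card
      = Fintype.card {π : Equiv.Perm (Fin n) // a.image π = c} := by
    rw [Fintype.card_subtype]
  rw [h1, Fintype.card_congr E, Fintype.card_prod, Fintype.card_equiv
    (Fintype.equivOfCardEq (by simp [ha, hc])), Fintype.card_equiv
    (Fintype.equivOfCardEq (by simp [Fintype.card_subtype_compl, ha, hc]))]
  simp [Fintype.card_subtype_compl, ha, hc]

/-- Code-anticode bound in the Johnson scheme J(n,w):
if every two distinct members of the code `C` have Johnson distance at least `D+1`
and every two members of the anticode `A` have Johnson distance at most `D`, then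
`|C| * |A| ≤ C(n,w)`. -/
theorem code_anticode_johnson (n w D : ℕ) (hw : w ≤ n)
    (C A : Finset (Finset (Fin n)))
    (hC : ∀ B ∈ C, B.card = w) (hA : ∀ B ∈ A, B.card = w)
    (hCdist : ∀ B₁ ∈ C, ∀ B₂ ∈ C, B₁ ≠ B₂ → D + 1 ≤ (B₁ \ B₂).card)
    (hAdiam : ∀ B₁ ∈ A, ∀ B₂ ∈ A, (B₁ \ B₂).card ≤ D) :
    C.card * A.card ≤ Nat.choose n w := by
  classical
  set S := ((C ×ˢ A) ×ˢ (Finset.univ : Finset (Equiv.Perm (Fin n)))).filter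
      (fun q => q.1.2.image q.2 = q.1.1) with hSdef
  -- exact count of S
  have hcount : S.card = C.card * A.card * (w.factorial * (n - w).factorial) := by
    rw [hSdef, Finset.card_filter, Finset.sum_product]
    have : ∀ p ∈ C ×ˢ A,
        (∑ π : Equiv.Perm (Fin n), if p.2.image π = p.1 then 1 else 0)
          = w.factorial * (n - w).factorial := by
      intro p hp
      rw [Finset.mem_product] at hp
      rw [← Finset.card_filter]
      exact card_fiber n w hw p.2 p.1 (hA _ hp.2) (hC _ hp.1)
    rw [Finset.sum_congr rfl this, Finset.sum_const, Finset.card_product, smul_eq_mul]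
  -- S injects into permutations
  have hinj : S.card ≤ Nat.factorial n := by
    have := Finset.card_le_card_of_injOn (f := Prod.snd) (t := Finset.univ)
      (fun q _ => Finset.mem_univ _) ?_ (s := S)
    · simpa using this.trans_eq (by simp [Fintype.card_perm])
    · rintro ⟨⟨c, a⟩, π⟩ hq ⟨⟨c', a'⟩, π'⟩ hq' (h : π = π')
      subst h
      rw [hSdef] at hq hq'
      simp only [Finset.mem_coe, Finset.mem_filter, Finset.mem_product] at hq hq'
      obtain ⟨⟨⟨hcC, haA⟩, -⟩, him⟩ := hq
      obtain ⟨⟨⟨hcC', haA'⟩, -⟩, him'⟩ := hq'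
      have hdist : (c \ c').card ≤ D := by
        rw [← him, ← him', ← Finset.image_sdiff _ _ π.injective,
          Finset.card_image_of_injective _ π.injective]
        exact hAdiam _ haA _ haA'
      have hcc : c = c' := by
        by_contra hne
        exact absurd (hCdist _ hcC _ hcC' hne) (by omega)
      subst hcc
      have : a = a' := Finset.image_injective π.injective (him.trans him'.symm)
      simp [this]
  rw [hcount] at hinj
  have hkey : Nat.choose n w * w.factorial * (n - w).factorial = n.factorial :=
    Nat.choose_mul_factorial_mul_factorial hw
  have hpos : 0 < w.factorial * (n - w).factorial :=
    Nat.mul_pos (Nat.factorial_pos _) (Nat.factorial_pos _)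
  have : C.card * A.card * (w.factorial * (n - w).factorial)
      ≤ Nat.choose n w * (w.factorial * (n - w).factorial) := by
    conv_rhs => rw [← mul_assoc, hkey]
    exact hinj
  exact Nat.le_of_mul_le_mul_right (by simpa [mul_comm] using this) hpos
end

section
/- Suppose there exists a Steiner system 𝓑 = S(t,w,n) with 1 ≤ t ≤ w and 2w ≤ n. Then every family A of w-element subsets of Fin n in which any two members have Johnson distance at most w−t satisfies |A| ≤ C(n−t, w−t), and the blocks of 𝓑 attain the code-anticode bound: |𝓑| · C(n−t, w−t) = C(n,w). -/
lemma aux_fiber_card_ge {n w : ℕ} (S B : Finset (Fin n)) (hS : S.card = w) (hB : B.card = w) :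
    w.factorial * (n - w).factorial ≤
      (Finset.univ.filter (fun g : Equiv.Perm (Fin n) => S.image g = B)).card := by
  classical
  have hc1 : Fintype.card {x : Fin n // x ∈ S} = Fintype.card {x : Fin n // x ∈ B} := by
    simp [Fintype.card_coe, hS, hB]
  have hc2 : Fintype.card {x : Fin n // ¬ x ∈ S} = Fintype.card {x : Fin n // ¬ x ∈ B} := by
    rw [Fintype.card_subtype_compl, Fintype.card_subtype_compl]
    simp [Fintype.card_coe, hS, hB]
  set e₁ := Fintype.equivOfCardEq hc1
  set e₂ := Fintype.equivOfCardEq hc2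
  set g₀ : Equiv.Perm (Fin n) := Equiv.subtypeCongr e₁ e₂ with hg₀def
  have hg₀ : ∀ x ∈ S, g₀ x ∈ B := by
    intro x hx
    have : g₀ x = (e₁ ⟨x, hx⟩ : Fin n) := by
      simp [hg₀def, Equiv.subtypeCongr, hx]
    rw [this]
    exact (e₁ ⟨x, hx⟩).2
  have himg₀ : S.image g₀ = B := by
    apply Finset.eq_of_subset_of_card_le
    · intro y hy
      obtain ⟨x, hx, rfl⟩ := Finset.mem_image.mp hy
      exact hg₀ x hx
    · rw [Finset.card_image_of_injective _ g₀.injective, hS, hB]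
  -- injection from pairs of permutations
  set F : Equiv.Perm {x : Fin n // x ∈ S} × Equiv.Perm {x : Fin n // ¬ x ∈ S} →
      {g : Equiv.Perm (Fin n) // S.image g = B} :=
    fun p => ⟨(Equiv.Perm.subtypeCongr p.1 p.2).trans g₀, by
      have h1 : S.image (Equiv.Perm.subtypeCongr p.1 p.2) = S := by
        apply Finset.eq_of_subset_of_card_le
        · intro y hy
          obtain ⟨x, hx, rfl⟩ := Finset.mem_image.mp hy
          rw [Equiv.Perm.subtypeCongr.left_apply _ _ hx]
          exact (p.1 ⟨x, hx⟩).2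
        · rw [Finset.card_image_of_injective _ (Equiv.injective _)]
      calc S.image ((Equiv.Perm.subtypeCongr p.1 p.2).trans g₀)
          = (S.image (Equiv.Perm.subtypeCongr p.1 p.2)).image g₀ := by
            rw [Finset.image_image]; rfl
        _ = B := by rw [h1, himg₀]⟩ with hFdef
  have hFinj : Function.Injective F := by
    intro p q hpq
    have h0 : ((Equiv.Perm.subtypeCongr p.1 p.2).trans g₀ : Equiv.Perm (Fin n))
        = (Equiv.Perm.subtypeCongr q.1 q.2).trans g₀ := congrArg Subtype.val hpq
    have h1 : (Equiv.Perm.subtypeCongr p.1 p.2 : Equiv.Perm (Fin n))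
        = Equiv.Perm.subtypeCongr q.1 q.2 := by
      ext x
      have := congrArg (fun e : Equiv.Perm (Fin n) => e x) h0
      exact congrArg _ (g₀.injective (by simpa using this))
    have hp1 : p.1 = q.1 := by
      ext x
      have h2 := congrArg (fun e : Equiv.Perm (Fin n) => e (x : Fin n)) h1
      simp only [Equiv.Perm.subtypeCongr.left_apply_subtype] at h2
      rw [Subtype.ext h2]
    have hp2 : p.2 = q.2 := by
      ext x
      have h2 := congrArg (fun e : Equiv.Perm (Fin n) => e (x : Fin n)) h1
      simp only [Equiv.Perm.subtypeCongr.right_apply_subtype] at h2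
      rw [Subtype.ext h2]
    exact Prod.ext hp1 hp2
  have := Fintype.card_le_of_injective F hFinj
  rw [Fintype.card_prod, Fintype.card_perm, Fintype.card_perm, Fintype.card_coe,
    Fintype.card_subtype_compl, Fintype.card_coe, hS, Fintype.card_fin] at this
  rwa [Fintype.card_subtype] at this

lemma aux_choose_identity {n w t : ℕ} (htw : t ≤ w) (hwn : w ≤ n) :
    n.choose w * w.choose t = n.choose t * (n - t).choose (w - t) := by
  have htn : t ≤ n := le_trans htw hwn
  have hwt : w - t ≤ n - t := Nat.sub_le_sub_right hwn t
  have h1 := Nat.choose_mul_factorial_mul_factorial htn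
  have h2 := Nat.choose_mul_factorial_mul_factorial hwn
  have h3 := Nat.choose_mul_factorial_mul_factorial hwt
  have h4 := Nat.choose_mul_factorial_mul_factorial htw
  have hnt : n - t - (w - t) = n - w := by omega
  rw [hnt] at h3
  have hpos : 0 < t.factorial * (w - t).factorial * (n - w).factorial :=
    Nat.mul_pos (Nat.mul_pos t.factorial_pos (w - t).factorial_pos) (n - w).factorial_pos
  apply Nat.eq_of_mul_eq_mul_right hpos
  calc n.choose w * w.choose t * (t.factorial * (w - t).factorial * (n - w).factorial)
      = n.choose w * (w.choose t * t.factorial * (w - t).factorial) * (n - w).factorial := by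
        ring
    _ = n.choose w * w.factorial * (n - w).factorial := by rw [h4]
    _ = n.factorial := h2
    _ = n.choose t * t.factorial * (n - t).factorial := h1.symm
    _ = n.choose t * t.factorial * ((n - t).choose (w - t) * (w - t).factorial
          * (n - w).factorial) := by rw [h3]
    _ = n.choose t * (n - t).choose (w - t) * (t.factorial * (w - t).factorial
          * (n - w).factorial) := by ring

lemma aux_steiner_count {n w t : ℕ} (𝓑 : Finset (Finset (Fin n)))
    (hblocks : ∀ B ∈ 𝓑, B.card = w)
    (hsteiner : ∀ T : Finset (Fin n), T.card = t → ∃! B, B ∈ 𝓑 ∧ T ⊆ B) :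
    𝓑.card * w.choose t = n.choose t := by
  classical
  set f : Finset (Fin n) → Finset (Fin n) :=
    fun T => if h : T.card = t then (hsteiner T h).choose else ∅ with hfdef
  have hfspec : ∀ (T : Finset (Fin n)) (h : T.card = t), f T ∈ 𝓑 ∧ T ⊆ f T := by
    intro T h
    have := (hsteiner T h).choose_spec.1
    simpa [hfdef, h] using this
  have hfuniq : ∀ (T : Finset (Fin n)) (h : T.card = t) (B : Finset (Fin n)),
      B ∈ 𝓑 → T ⊆ B → f T = B := by
    intro T h B hB hTB
    have := (hsteiner T h).choose_spec.2 B ⟨hB, hTB⟩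
    simp [hfdef, h, this]
  have hmem : ∀ T ∈ (Finset.univ : Finset (Fin n)).powersetCard t, f T ∈ 𝓑 := by
    intro T hT
    exact (hfspec T (Finset.mem_powersetCard.mp hT).2).1
  have hcount := Finset.card_eq_sum_card_fiberwise hmem
  have hfib : ∀ B ∈ 𝓑,
      ((Finset.univ : Finset (Fin n)).powersetCard t).filter (fun T => f T = B)
        = B.powersetCard t := by
    intro B hB
    ext T
    simp only [Finset.mem_filter, Finset.mem_powersetCard, Finset.subset_univ, true_and]
    constructor
    · rintro ⟨hTt, hfT⟩
      exact ⟨hfT ▸ (hfspec T hTt).2, hTt⟩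
    · rintro ⟨hTB, hTt⟩
      exact ⟨hTt, hfuniq T hTt B hB hTB⟩
  rw [Finset.sum_congr rfl (fun B hB => by rw [hfib B hB])] at hcount
  have : ∀ B ∈ 𝓑, (B.powersetCard t).card = w.choose t := by
    intro B hB
    rw [Finset.card_powersetCard, hblocks B hB]
  rw [Finset.sum_congr rfl this, Finset.sum_const, smul_eq_mul] at hcount
  rw [Finset.card_powersetCard, Finset.card_univ, Fintype.card_fin] at hcount
  omega

/-- A Steiner system S(t,w,n) is a diameter perfect code: every anticode of
`w`-subsets with pairwise Johnson distance at most `w - t` has size at most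
`C(n-t, w-t)`, and the blocks attain the code-anticode bound
`|𝓑| * C(n-t, w-t) = C(n,w)`. -/
theorem steiner_diameter_perfect (n w t : ℕ) (ht : 1 ≤ t) (htw : t ≤ w)
    (hw : 2 * w ≤ n) (𝓑 : Finset (Finset (Fin n)))
    (hblocks : ∀ B ∈ 𝓑, B.card = w)
    (hsteiner : ∀ T : Finset (Fin n), T.card = t → ∃! B, B ∈ 𝓑 ∧ T ⊆ B) :
    (∀ A : Finset (Finset (Fin n)), (∀ S ∈ A, S.card = w) →
      (∀ S₁ ∈ A, ∀ S₂ ∈ A, (S₁ \ S₂).card ≤ w - t) →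
      A.card ≤ Nat.choose (n - t) (w - t)) ∧
    𝓑.card * Nat.choose (n - t) (w - t) = Nat.choose n w := by
  have aux_steiner_count := aux_steiner_count 𝓑 hblocks hsteiner
  have aux_choose_identity := aux_choose_identity htw (by omega : w ≤ n)
  have aux_fiber_card_ge := fun (S B : Finset (Fin n)) hS hB =>
    aux_fiber_card_ge (n := n) (w := w) S B hS hB
  classical
  have htn : t ≤ n := by omega
  have hwn : w ≤ n := by omega
  have hinter : ∀ B₁ ∈ 𝓑, ∀ B₂ ∈ 𝓑, B₁ ≠ B₂ → (B₁ ∩ B₂).card < t := by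
    intro B₁ h₁ B₂ h₂ hne
    by_contra hge
    push_neg at hge
    obtain ⟨T, hTsub, hTcard⟩ := Finset.exists_subset_card_eq (s := B₁ ∩ B₂) (n := t) hge
    obtain ⟨B, hB, huniq⟩ := hsteiner T hTcard
    exact hne ((huniq B₁ ⟨h₁, hTsub.trans Finset.inter_subset_left⟩).trans
      (huniq B₂ ⟨h₂, hTsub.trans Finset.inter_subset_right⟩).symm)
  have hCwt : 0 < w.choose t := Nat.choose_pos htw
  have part2 : 𝓑.card * (n - t).choose (w - t) = n.choose w := by
    apply Nat.eq_of_mul_eq_mul_right hCwt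
    calc 𝓑.card * (n - t).choose (w - t) * w.choose t
        = 𝓑.card * w.choose t * (n - t).choose (w - t) := by ring
      _ = n.choose t * (n - t).choose (w - t) := by rw [aux_steiner_count]
      _ = n.choose w * w.choose t := aux_choose_identity.symm
  have hBpos : 0 < 𝓑.card := by
    obtain ⟨T, _, hTcard⟩ := Finset.exists_subset_card_eq (s := (Finset.univ : Finset (Fin n))) (n := t)
      (by simpa using htn)
    obtain ⟨B, hB, _⟩ := hsteiner T hTcard
    exact Finset.card_pos.mpr ⟨B, hB.1⟩
  refine ⟨?_, part2⟩
  intro A hA hAdist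
  have upper : ∑ g : Equiv.Perm (Fin n),
      ((𝓑 ×ˢ A).filter (fun p => p.2.image g = p.1)).card ≤ n.factorial := by
    calc ∑ g : Equiv.Perm (Fin n),
        ((𝓑 ×ˢ A).filter (fun p => p.2.image g = p.1)).card
        ≤ ∑ _g : Equiv.Perm (Fin n), 1 := by
          apply Finset.sum_le_sum
          intro g _
          apply Finset.card_le_one.mpr
          intro p hp q hq
          simp only [Finset.mem_filter, Finset.mem_product] at hp hq
          obtain ⟨⟨hpB, hpA⟩, hpe⟩ := hp
          obtain ⟨⟨hqB, hqA⟩, hqe⟩ := hq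
          have hBeq : p.1 = q.1 := by
            by_contra hne
            have hd : (p.1 \ q.1).card ≤ w - t := by
              rw [← hpe, ← hqe, ← Finset.image_sdiff _ _ g.injective,
                Finset.card_image_of_injective _ g.injective]
              exact hAdist _ hpA _ hqA
            have h5 := hinter p.1 hpB q.1 hqB hne
            have h6 := Finset.card_inter_add_card_sdiff p.1 q.1
            have h7 := hblocks p.1 hpB
            omega
          have hSeq : p.2 = q.2 := by
            apply Finset.image_injective g.injective
            rw [hpe, hqe, hBeq]
          exact Prod.ext hBeq hSeq
      _ = n.factorial := by
          rw [Finset.sum_const, smul_eq_mul, mul_one, Finset.card_univ,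
            Fintype.card_perm, Fintype.card_fin]
  have lower : (𝓑.card * A.card) * (w.factorial * (n - w).factorial) ≤
      ∑ g : Equiv.Perm (Fin n), ((𝓑 ×ˢ A).filter (fun p => p.2.image g = p.1)).card := by
    have swap : ∑ g : Equiv.Perm (Fin n),
        ((𝓑 ×ˢ A).filter (fun p => p.2.image g = p.1)).card
        = ∑ p ∈ 𝓑 ×ˢ A,
          (Finset.univ.filter (fun g : Equiv.Perm (Fin n) => p.2.image g = p.1)).card := by
      simp only [Finset.card_filter]
      exact Finset.sum_comm
    rw [swap]
    calc (𝓑.card * A.card) * (w.factorial * (n - w).factorial)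
        = ∑ _p ∈ 𝓑 ×ˢ A, w.factorial * (n - w).factorial := by
          rw [Finset.sum_const, smul_eq_mul, Finset.card_product]
      _ ≤ ∑ p ∈ 𝓑 ×ˢ A,
          (Finset.univ.filter (fun g : Equiv.Perm (Fin n) => p.2.image g = p.1)).card := by
          apply Finset.sum_le_sum
          intro p hp
          rw [Finset.mem_product] at hp
          exact aux_fiber_card_ge p.2 p.1 (hA p.2 hp.2) (hblocks p.1 hp.1)
  have key : 𝓑.card * A.card ≤ n.choose w := by
    have hfac : n.choose w * (w.factorial * (n - w).factorial) = n.factorial := by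
      rw [← mul_assoc]; exact Nat.choose_mul_factorial_mul_factorial hwn
    have h8 := le_trans lower upper
    rw [← hfac] at h8
    exact Nat.le_of_mul_le_mul_right h8
      (Nat.mul_pos w.factorial_pos (n - w).factorial_pos)
  rw [← part2] at key
  exact Nat.le_of_mul_le_mul_left key hBpos
end

section
/- Let 𝓑 be a Steiner system S(t,w,n) with 1 ≤ t ≤ w and 2w ≤ n, and let 𝓑̄ = { (Fin n) \ B : B ∈ 𝓑 } be the family of complements of its blocks. Then 𝓑̄ is a family of (n−w)-element subsets of Fin n in which any two distinct members have Johnson distance at least w−t+1, it satisfies |𝓑̄| · C(n−t, w−t) = C(n, n−w), and every family A of (n−w)-element subsets of Fin n with pairwise Johnson distance at most w−t satisfies |A| ≤ C(n−t, w−t). -/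
open Finset

/-- There is a permutation carrying one finset to another of the same size. -/
lemma exists_perm_image_eq {n : ℕ} (a c : Finset (Fin n)) (h : a.card = c.card) :
    ∃ σ : Equiv.Perm (Fin n), a.image σ = c := by
  have hcard : Fintype.card {x // x ∈ a} = Fintype.card {x // x ∈ c} := by
    simpa [Fintype.card_coe] using h
  let e := Fintype.equivOfCardEq hcard
  refine ⟨e.extendSubtype, Finset.eq_of_subset_of_card_le ?_ ?_⟩
  · intro y hy
    obtain ⟨x, hx, rfl⟩ := Finset.mem_image.mp hy
    exact e.extendSubtype_mem x hx
  · rw [Finset.card_image_of_injective _ e.extendSubtype.injective, h]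

noncomputable def Nperm {n : ℕ} (a c : Finset (Fin n)) : ℕ :=
  (Finset.univ.filter (fun σ : Equiv.Perm (Fin n) => a.image σ = c)).card

lemma perm_image_mul {n : ℕ} (a : Finset (Fin n)) (τ σ : Equiv.Perm (Fin n)) :
    a.image ⇑(τ * σ) = (a.image σ).image τ := by
  rw [Finset.image_image]; rfl

lemma Nperm_const {n : ℕ} (a c a' c' : Finset (Fin n)) (ha : a.card = a'.card)
    (hc : c.card = c'.card) : Nperm a c = Nperm a' c' := by
  obtain ⟨τ, hτ⟩ := exists_perm_image_eq a a' ha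
  obtain ⟨υ, hυ⟩ := exists_perm_image_eq c c' hc
  have hback : a'.image ⇑τ⁻¹ = a := by
    rw [← hτ, ← perm_image_mul]; simp
  have hcback : c'.image ⇑υ⁻¹ = c := by
    rw [← hυ, ← perm_image_mul]; simp
  unfold Nperm
  apply Finset.card_bij' (fun σ _ => υ * σ * τ⁻¹) (fun σ _ => υ⁻¹ * σ * τ)
  · intro σ hσ
    simp only [Finset.mem_filter, Finset.mem_univ, true_and] at hσ ⊢
    rw [mul_assoc, perm_image_mul, perm_image_mul, hback, hσ, hυ]
  · intro σ hσ
    simp only [Finset.mem_filter, Finset.mem_univ, true_and] at hσ ⊢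
    rw [mul_assoc, perm_image_mul, perm_image_mul, hτ, hσ, hcback]
  · intro σ _; group
  · intro σ _; group

lemma Nperm_sum {n k : ℕ} (a : Finset (Fin n)) (ha : a.card = k) :
    Nat.choose n k * Nperm a a = n.factorial := by
  classical
  have hfib : (Finset.univ : Finset (Equiv.Perm (Fin n))).card =
      ∑ c ∈ Finset.powersetCard k (Finset.univ : Finset (Fin n)),
        (Finset.univ.filter (fun σ : Equiv.Perm (Fin n) => a.image σ = c)).card := by
    apply Finset.card_eq_sum_card_fiberwise
    intro σ _
    simp only [Finset.mem_coe, Finset.mem_powersetCard]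
    exact ⟨Finset.subset_univ _, by rw [Finset.card_image_of_injective _ σ.injective, ha]⟩
  have hconst : ∀ c ∈ Finset.powersetCard k (Finset.univ : Finset (Fin n)),
      (Finset.univ.filter (fun σ : Equiv.Perm (Fin n) => a.image σ = c)).card = Nperm a a := by
    intro c hc
    rw [Finset.mem_powersetCard] at hc
    exact Nperm_const a c a a rfl (hc.2.trans ha.symm)
  rw [Finset.sum_congr rfl hconst, Finset.sum_const, smul_eq_mul,
    Finset.card_powersetCard] at hfib
  simp only [Finset.card_univ, Fintype.card_perm, Fintype.card_fin] at hfib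
  exact hfib.symm

/-- The complement of a Steiner system S(t,w,n) is a diameter perfect code:
its members are `(n-w)`-subsets, any two distinct members have Johnson distance
at least `w - t + 1`, it attains the code-anticode bound
`|𝓑̄| * C(n-t, w-t) = C(n, n-w)`, and every anticode of `(n-w)`-subsets with
pairwise Johnson distance at most `w - t` has size at most `C(n-t, w-t)`. -/
theorem steiner_complement_diameter_perfect (n w t : ℕ) (ht : 1 ≤ t) (htw : t ≤ w)
    (hw : 2 * w ≤ n) (𝓑 : Finset (Finset (Fin n)))
    (hblocks : ∀ B ∈ 𝓑, B.card = w)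
    (hsteiner : ∀ T : Finset (Fin n), T.card = t → ∃! B, B ∈ 𝓑 ∧ T ⊆ B) :
    (∀ X ∈ 𝓑.image (fun B => Bᶜ), X.card = n - w) ∧
    (∀ X₁ ∈ 𝓑.image (fun B => Bᶜ), ∀ X₂ ∈ 𝓑.image (fun B => Bᶜ),
      X₁ ≠ X₂ → w - t + 1 ≤ (X₁ \ X₂).card) ∧
    (𝓑.image (fun B => Bᶜ)).card * Nat.choose (n - t) (w - t) = Nat.choose n (n - w) ∧
    (∀ A : Finset (Finset (Fin n)), (∀ S ∈ A, S.card = n - w) →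
      (∀ S₁ ∈ A, ∀ S₂ ∈ A, (S₁ \ S₂).card ≤ w - t) →
      A.card ≤ Nat.choose (n - t) (w - t)) := by
  classical
  have hwn : w ≤ n := by omega
  have htn : t ≤ n := by omega
  -- Part 1
  have part1 : ∀ X ∈ 𝓑.image (fun B => Bᶜ), X.card = n - w := by
    intro X hX
    obtain ⟨B, hB, rfl⟩ := Finset.mem_image.mp hX
    rw [Finset.card_compl, hblocks B hB, Fintype.card_fin]
  -- intersections of distinct blocks are small
  have hint : ∀ B₁ ∈ 𝓑, ∀ B₂ ∈ 𝓑, B₁ ≠ B₂ → (B₁ ∩ B₂).card < t := by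
    intro B₁ h₁ B₂ h₂ hne
    by_contra h
    push_neg at h
    obtain ⟨T, hTsub, hTcard⟩ := Finset.exists_subset_card_eq h
    obtain ⟨B, -, huniq⟩ := hsteiner T hTcard
    exact hne ((huniq B₁ ⟨h₁, hTsub.trans Finset.inter_subset_left⟩).trans
      (huniq B₂ ⟨h₂, hTsub.trans Finset.inter_subset_right⟩).symm)
  -- Part 2
  have part2 : ∀ X₁ ∈ 𝓑.image (fun B => Bᶜ), ∀ X₂ ∈ 𝓑.image (fun B => Bᶜ),
      X₁ ≠ X₂ → w - t + 1 ≤ (X₁ \ X₂).card := by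
    intro X₁ hX₁ X₂ hX₂ hne
    obtain ⟨B₁, h₁, rfl⟩ := Finset.mem_image.mp hX₁
    obtain ⟨B₂, h₂, rfl⟩ := Finset.mem_image.mp hX₂
    have hBne : B₁ ≠ B₂ := fun h => hne (by rw [h])
    have hsd : B₁ᶜ \ B₂ᶜ = B₂ \ B₁ := by
      ext x; simp [Finset.mem_sdiff, Finset.mem_compl]; tauto
    rw [hsd]
    have h1 := Finset.card_sdiff_add_card_inter B₂ B₁
    have h2 := hint B₂ h₂ B₁ h₁ hBne.symm
    have := hblocks B₂ h₂
    omega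
  -- double counting: |𝓑| * C(w,t) = C(n,t)
  have hcount : 𝓑.card * Nat.choose w t = Nat.choose n t := by
    set f : Finset (Fin n) → Finset (Fin n) :=
      fun T => if h : T.card = t then (hsteiner T h).exists.choose else ∅ with hf
    have hfib := Finset.card_eq_sum_card_fiberwise (s := Finset.powersetCard t
        (Finset.univ : Finset (Fin n))) (t := 𝓑) (f := f) ?_
    · have hfibeq : ∀ B ∈ 𝓑,
          ((Finset.powersetCard t (Finset.univ : Finset (Fin n))).filter
            (fun T => f T = B)) = B.powersetCard t := by
        intro B hB
        ext T
        simp only [Finset.mem_filter, Finset.mem_powersetCard, Finset.subset_univ, true_and]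
        constructor
        · rintro ⟨hTt, rfl⟩
          simp only [hf, dif_pos hTt]
          exact ⟨((hsteiner T hTt).exists.choose_spec).2, hTt⟩
        · rintro ⟨hTB, hTt⟩
          refine ⟨hTt, ?_⟩
          simp only [hf, dif_pos hTt]
          exact (hsteiner T hTt).unique (hsteiner T hTt).exists.choose_spec ⟨hB, hTB⟩
      rw [Finset.sum_congr rfl (fun B hB => by
        rw [hfibeq B hB, Finset.card_powersetCard, hblocks B hB])] at hfib
      rw [Finset.card_powersetCard, Finset.card_univ, Fintype.card_fin,
        Finset.sum_const, smul_eq_mul] at hfib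
      exact hfib.symm
    · intro T hT
      rw [Finset.mem_coe, Finset.mem_powersetCard] at hT
      simp only [hf, dif_pos hT.2]
      exact ((hsteiner T hT.2).exists.choose_spec).1
  have hcardim : (𝓑.image (fun B => Bᶜ)).card = 𝓑.card :=
    Finset.card_image_of_injective _ compl_injective
  -- Part 3
  have part3 : (𝓑.image (fun B => Bᶜ)).card * Nat.choose (n - t) (w - t)
      = Nat.choose n (n - w) := by
    have hid : n.choose w * w.choose t = n.choose t * (n - t).choose (w - t) :=
      Nat.choose_mul htw
    have hpos : 0 < Nat.choose w t := Nat.choose_pos htw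
    have key : (𝓑.card * Nat.choose (n - t) (w - t)) * Nat.choose w t
        = Nat.choose n (n - w) * Nat.choose w t := by
      rw [Nat.choose_symm hwn]
      calc (𝓑.card * Nat.choose (n - t) (w - t)) * Nat.choose w t
          = (𝓑.card * Nat.choose w t) * Nat.choose (n - t) (w - t) := by ring
        _ = Nat.choose n t * Nat.choose (n - t) (w - t) := by rw [hcount]
        _ = Nat.choose n w * Nat.choose w t := hid.symm
    rw [hcardim]
    exact Nat.eq_of_mul_eq_mul_right hpos key
  refine ⟨part1, part2, part3, ?_⟩
  -- Part 4: code-anticode bound via averaging over permutations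
  intro A hA hdist
  set C := 𝓑.image (fun B => Bᶜ) with hC
  -- 𝓑 is nonempty
  obtain ⟨T₀, -, hT₀⟩ := Finset.exists_subset_card_eq
    (show t ≤ (Finset.univ : Finset (Fin n)).card by
      simp only [Finset.card_univ, Fintype.card_fin]; exact htn)
  obtain ⟨B₀, ⟨hB₀, -⟩, -⟩ := hsteiner T₀ hT₀
  have hCne : B₀ᶜ ∈ C := Finset.mem_image_of_mem _ hB₀
  have hc₀ : (B₀ᶜ).card = n - w := part1 _ hCne
  have hN₀ : Nat.choose n (n - w) * Nperm (B₀ᶜ) (B₀ᶜ) = n.factorial := Nperm_sum _ hc₀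
  have hN₀pos : 0 < Nperm (B₀ᶜ) (B₀ᶜ) := by
    rcases Nat.eq_zero_or_pos (Nperm (B₀ᶜ) (B₀ᶜ)) with h | h
    · rw [h, Nat.mul_zero] at hN₀
      exact absurd hN₀.symm (Nat.factorial_ne_zero n)
    · exact h
  have hupper : ∀ σ : Equiv.Perm (Fin n),
      ((A ×ˢ C).filter (fun p => p.1.image σ = p.2)).card ≤ 1 := by
    intro σ
    apply Finset.card_le_one.mpr
    intro p hp q hq
    simp only [Finset.mem_filter, Finset.mem_product] at hp hq
    obtain ⟨⟨hpA, hpC⟩, hpe⟩ := hp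
    obtain ⟨⟨hqA, hqC⟩, hqe⟩ := hq
    have hdiff : (p.2 \ q.2).card ≤ w - t := by
      rw [← hpe, ← hqe, ← Finset.image_sdiff _ _ σ.injective,
        Finset.card_image_of_injective _ σ.injective]
      exact hdist _ hpA _ hqA
    have h2 : p.2 = q.2 := by
      by_contra hne
      have := part2 _ hpC _ hqC hne
      omega
    have h1 : p.1 = q.1 := by
      have h := hpe.trans (h2.trans hqe.symm)
      have e1 : p.1 = (p.1.image σ).image ⇑σ⁻¹ := by rw [← perm_image_mul]; simp
      rw [e1, h, ← perm_image_mul]; simp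
    exact Prod.ext h1 h2
  have hswap : ∑ σ : Equiv.Perm (Fin n), ((A ×ˢ C).filter (fun p => p.1.image σ = p.2)).card
      = A.card * C.card * Nperm (B₀ᶜ) (B₀ᶜ) := by
    calc ∑ σ : Equiv.Perm (Fin n), ((A ×ˢ C).filter (fun p => p.1.image σ = p.2)).card
        = ∑ σ : Equiv.Perm (Fin n), ∑ p ∈ A ×ˢ C,
            if p.1.image σ = p.2 then 1 else 0 := by
          simp only [Finset.card_filter]
      _ = ∑ p ∈ A ×ˢ C, ∑ σ : Equiv.Perm (Fin n),
            if p.1.image σ = p.2 then 1 else 0 := Finset.sum_comm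
      _ = ∑ p ∈ A ×ˢ C, Nperm p.1 p.2 := by
          refine Finset.sum_congr rfl (fun p _ => ?_)
          rw [Nperm, Finset.card_filter]
      _ = ∑ _p ∈ A ×ˢ C, Nperm (B₀ᶜ) (B₀ᶜ) := by
          refine Finset.sum_congr rfl (fun p hp => ?_)
          rw [Finset.mem_product] at hp
          exact Nperm_const _ _ _ _ ((hA _ hp.1).trans hc₀.symm)
            ((part1 _ hp.2).trans hc₀.symm)
      _ = A.card * C.card * Nperm (B₀ᶜ) (B₀ᶜ) := by
          rw [Finset.sum_const, smul_eq_mul, Finset.card_product]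
  have hfact : A.card * C.card * Nperm (B₀ᶜ) (B₀ᶜ) ≤ n.factorial := by
    rw [← hswap]
    calc ∑ σ : Equiv.Perm (Fin n), ((A ×ˢ C).filter (fun p => p.1.image σ = p.2)).card
        ≤ ∑ _σ : Equiv.Perm (Fin n), 1 := Finset.sum_le_sum (fun σ _ => hupper σ)
      _ = n.factorial := by
          simp [Finset.card_univ, Fintype.card_perm]
  rw [← hN₀] at hfact
  have hAC : A.card * C.card ≤ Nat.choose n (n - w) :=
    Nat.le_of_mul_le_mul_right (by linarith [hfact]) hN₀pos
  rw [← part3] at hAC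
  have hCpos : 0 < C.card := Finset.card_pos.mpr ⟨_, hCne⟩
  have : A.card * C.card ≤ Nat.choose (n - t) (w - t) * C.card := by
    calc A.card * C.card ≤ C.card * Nat.choose (n - t) (w - t) := hAC
      _ = Nat.choose (n - t) (w - t) * C.card := Nat.mul_comm _ _
  exact Nat.le_of_mul_le_mul_right this hCpos
end

section
/- Let q ≥ 3, let n, w be natural numbers with w ≤ n, and let D be a set of natural numbers. Let C and A be sets of words of length n and weight w over Fin q such that the Hamming distance between any two distinct members of C lies in D. Let m be the maximum cardinality of a subset C' of A such that the Hamming distance between any two distinct members of C' lies in D. Then |C| · |A| ≤ m · C(n,w) · (q−1)^w. -/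
/-- The weight of a word `x : Fin n → Fin q`: the number of nonzero coordinates. -/
def wt {n q : ℕ} (x : Fin n → Fin q) : ℕ :=
  (Finset.univ.filter fun i => (x i : ℕ) ≠ 0).card

section Grp
variable (n q : ℕ) [NeZero q]

abbrev HH : Subgroup (Equiv.Perm (Fin q)) := MulAction.stabilizer _ (0 : Fin q)

def phi : Equiv.Perm (Fin n) →* MulAut (Fin n → HH q) where
  toFun π :=
    { toFun := fun f => f ∘ π.symm
      invFun := fun f => f ∘ π
      left_inv := fun f => by funext i; simp
      right_inv := fun f => by funext i; simp
      map_mul' := fun f g => rfl }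
  map_one' := by ext f i; simp; rfl
  map_mul' := fun π ρ => rfl

abbrev GG := (Fin n → HH q) ⋊[phi n q] Equiv.Perm (Fin n)

def ge : GG n q ≃ (Fin n → HH q) × Equiv.Perm (Fin n) where
  toFun g := (g.left, g.right)
  invFun p := ⟨p.1, p.2⟩
  left_inv g := rfl
  right_inv p := rfl

instance : Fintype (GG n q) := Fintype.ofEquiv _ (ge n q).symm
instance : DecidableEq (GG n q) := (ge n q).decidableEq

variable {n q}

lemma val0iff {v : Fin q} : (v : ℕ) = 0 ↔ v = 0 := by
  constructor
  · intro h; exact Fin.ext (by simp [h])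
  · rintro rfl; simp

def act (g : GG n q) (x : Fin n → Fin q) : Fin n → Fin q :=
  fun i => (g.left i : Equiv.Perm (Fin q)) (x (g.right⁻¹ i))

lemma act_one (x : Fin n → Fin q) : act (1 : GG n q) x = x := by
  funext i; simp [act]

lemma act_mul (u v : GG n q) (x : Fin n → Fin q) :
    act (u * v) x = act u (act v x) := by
  funext i
  simp only [act, SemidirectProduct.mul_left, SemidirectProduct.mul_right, mul_inv_rev,
    Pi.mul_apply, Subgroup.coe_mul, Equiv.Perm.mul_apply, phi]
  rfl

lemma act_inj (g : GG n q) : Function.Injective (act g) := by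
  intro x y h
  have := congrArg (act g⁻¹) h
  rwa [← act_mul, ← act_mul, inv_mul_cancel, act_one, act_one] at this

lemma act_zero_iff (g : GG n q) (v : Fin q) (i : Fin n) :
    ((g.left i : Equiv.Perm (Fin q)) v = 0) ↔ v = 0 := by
  have h0 : (g.left i : Equiv.Perm (Fin q)) 0 = 0 := g.left i |>.2
  constructor
  · intro h; exact (g.left i : Equiv.Perm (Fin q)).injective (h.trans h0.symm)
  · rintro rfl; exact h0

lemma wt_act (g : GG n q) (x : Fin n → Fin q) : wt (act g x) = wt x := by
  unfold wt
  apply Finset.card_nbij' (i := fun j => g.right⁻¹ j) (j := fun i => g.right i)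
  · intro j hj
    simp only [Finset.mem_coe, Finset.mem_filter, Finset.mem_univ, true_and] at *
    intro h0
    apply hj
    simp only [act, val0iff] at *
    rw [(act_zero_iff g _ _).2 h0]
  · intro i hi
    simp only [Finset.mem_coe, Finset.mem_filter, Finset.mem_univ, true_and] at *
    intro h0
    apply hi
    simp only [act, val0iff, act_zero_iff, Equiv.Perm.inv_def, Equiv.symm_apply_apply] at h0 ⊢
    exact h0
  · intro j _; simp
  · intro i _; simp

lemma hammingDist_act (g : GG n q) (x y : Fin n → Fin q) :
    hammingDist (act g x) (act g y) = hammingDist x y := by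
  unfold hammingDist
  apply Finset.card_nbij' (i := fun j => g.right⁻¹ j) (j := fun i => g.right i)
  · intro j hj
    simp only [Finset.mem_coe, Finset.mem_filter, Finset.mem_univ, true_and] at *
    intro h0
    exact hj (by simp only [act, h0])
  · intro i hi
    simp only [Finset.mem_coe, Finset.mem_filter, Finset.mem_univ, true_and] at *
    intro h0
    exact hi ((g.left (g.right i) : Equiv.Perm (Fin q)).injective (by simpa [act] using h0))
  · intro j _; simp
  · intro i _; simp

lemma exists_act (c a : Fin n → Fin q) (h : wt c = wt a) : ∃ g : GG n q, act g c = a := by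
  classical
  set s : Finset (Fin n) := Finset.univ.filter fun i => (c i : ℕ) ≠ 0 with hs
  set t : Finset (Fin n) := Finset.univ.filter fun i => (a i : ℕ) ≠ 0 with ht
  have hcard : s.card = t.card := h
  have hcardc : sᶜ.card = tᶜ.card := by
    rw [Finset.card_compl, Finset.card_compl, hcard]
  have e₁ : {i // i ∈ s} ≃ {i // i ∈ t} := Finset.equivOfCardEq hcard
  have e₂ : {i // ¬ i ∈ s} ≃ {i // ¬ i ∈ t} :=
    (Equiv.subtypeEquivRight (fun i => by simp)).trans
      ((Finset.equivOfCardEq hcardc).trans (Equiv.subtypeEquivRight (fun i => by simp)))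
  set π : Equiv.Perm (Fin n) :=
    (Equiv.sumCompl (· ∈ s)).symm.trans ((e₁.sumCongr e₂).trans (Equiv.sumCompl (· ∈ t))) with hπ
  have key : ∀ i, π i ∈ t ↔ i ∈ s := by
    intro i
    by_cases hi : i ∈ s
    · simp only [hπ, Equiv.trans_apply, Equiv.sumCompl_symm_apply_of_pos hi,
        Equiv.sumCongr_apply, Sum.map_inl, Equiv.sumCompl_apply_inl]
      exact iff_of_true (e₁ ⟨i, hi⟩).2 hi
    · simp only [hπ, Equiv.trans_apply, Equiv.sumCompl_symm_apply_of_neg hi,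
        Equiv.sumCongr_apply, Sum.map_inr, Equiv.sumCompl_apply_inr]
      exact iff_of_false (e₂ ⟨i, hi⟩).2 hi
  have key2 : ∀ i, c (π⁻¹ i) = 0 ↔ a i = 0 := by
    intro i
    have h1 := key (π⁻¹ i)
    rw [show π (π⁻¹ i) = i from π.apply_symm_apply i] at h1
    simp only [hs, ht, Finset.mem_filter, Finset.mem_univ, true_and, ne_eq, val0iff] at h1
    exact not_iff_not.mp h1.symm
  refine ⟨⟨fun i => if hai : a i = 0 then 1 else
      ⟨Equiv.swap (c (π⁻¹ i)) (a i), ?_⟩, π⟩, ?_⟩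
  · have hc0 : c (π⁻¹ i) ≠ 0 := fun hh => hai ((key2 i).1 hh)
    simp only [MulAction.mem_stabilizer_iff, Equiv.Perm.smul_def]
    exact Equiv.swap_apply_of_ne_of_ne (Ne.symm hc0) (Ne.symm hai)
  · funext i
    simp only [act]
    by_cases hai : a i = 0
    · simp only [hai, dif_pos]
      simpa [hai] using (key2 i).2 hai
    · simp only [hai, dif_neg, not_false_iff]
      exact Equiv.swap_apply_left _ _

lemma card_fiber_eq (c a c' a' : Fin n → Fin q) (h2 : wt c = wt c') (h3 : wt a = wt a') :
    (Finset.univ.filter fun g : GG n q => act g c = a).card =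
      (Finset.univ.filter fun g : GG n q => act g c' = a').card := by
  classical
  obtain ⟨g₁, hg₁⟩ := exists_act c' c h2.symm
  obtain ⟨g₂, hg₂⟩ := exists_act a a' h3
  apply Finset.card_bij' (i := fun g _ => g₂ * g * g₁) (j := fun h _ => g₂⁻¹ * h * g₁⁻¹)
  · intro g hg
    simp only [Finset.mem_filter, Finset.mem_univ, true_and] at *
    rw [act_mul, act_mul, hg₁, hg, hg₂]
  · intro h hh
    simp only [Finset.mem_filter, Finset.mem_univ, true_and] at *
    have : act g₂⁻¹ a' = a := by rw [← hg₂, ← act_mul, inv_mul_cancel, act_one]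
    have h1c : act g₁⁻¹ c = c' := by rw [← hg₁, ← act_mul, inv_mul_cancel, act_one]
    rw [act_mul, act_mul, h1c, hh, this]
  · intro g _; group
  · intro h _; group

lemma card_J (w : ℕ) (hw : w ≤ n) :
    (Finset.univ.filter fun x : Fin n → Fin q => wt x = w).card =
      Nat.choose n w * (q - 1) ^ w := by
  classical
  rw [Finset.card_eq_sum_card_fiberwise
    (f := fun x : Fin n → Fin q => Finset.univ.filter fun i => (x i : ℕ) ≠ 0)
    (t := Finset.powersetCard w Finset.univ)
    (fun x hx => by
      simp only [Finset.mem_coe, Finset.mem_filter] at hx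
      exact Finset.mem_powersetCard.2 ⟨Finset.subset_univ _, hx.2⟩)]
  have hfib : ∀ s ∈ Finset.powersetCard w (Finset.univ : Finset (Fin n)),
      ((Finset.univ.filter fun x : Fin n → Fin q => wt x = w).filter
        (fun x => Finset.univ.filter (fun i => (x i : ℕ) ≠ 0) = s)).card = (q - 1) ^ w := by
    intro s hscard
    have hsc : s.card = w := (Finset.mem_powersetCard.1 hscard).2
    have heq : ((Finset.univ.filter fun x : Fin n → Fin q => wt x = w).filter
        (fun x => Finset.univ.filter (fun i => (x i : ℕ) ≠ 0) = s)) =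
        Finset.univ.filter (fun x : Fin n → Fin q =>
          Finset.univ.filter (fun i => (x i : ℕ) ≠ 0) = s) := by
      ext x
      simp only [Finset.mem_filter, Finset.mem_univ, true_and, and_iff_right_iff_imp]
      intro hx
      rw [wt, hx, hsc]
    rw [heq, ← Fintype.card_subtype]
    have e : {x : Fin n → Fin q // Finset.univ.filter (fun i => (x i : ℕ) ≠ 0) = s} ≃
        ({i // i ∈ s} → {v : Fin q // v ≠ 0}) := {
      toFun := fun x j => ⟨x.1 j.1, by
        have hj : j.1 ∈ Finset.univ.filter (fun i => ((x.1 i : ℕ) ≠ 0)) := by rw [x.2]; exact j.2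
        simp only [Finset.mem_filter, Finset.mem_univ, true_and, ne_eq, val0iff] at hj
        exact hj⟩
      invFun := fun f => ⟨fun i => if h : i ∈ s then (f ⟨i, h⟩).1 else 0, by
        ext i
        simp only [Finset.mem_filter, Finset.mem_univ, true_and, ne_eq, val0iff]
        by_cases h : i ∈ s
        · simp only [h, dif_pos, iff_true]; exact (f ⟨i, h⟩).2
        · simp [h]⟩
      left_inv := fun x => by
        apply Subtype.ext
        funext i
        by_cases h : i ∈ s
        · simp [h]
        · simp only [h, dif_neg, not_false_iff]
          have hi : i ∉ Finset.univ.filter (fun k => ((x.1 k : ℕ) ≠ 0)) := by rw [x.2]; exact h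
          simp only [Finset.mem_filter, Finset.mem_univ, true_and, ne_eq, not_not, val0iff] at hi
          exact hi.symm
      right_inv := fun f => by
        funext j
        apply Subtype.ext
        simp [j.2] }
    rw [Fintype.card_congr e, Fintype.card_fun, Fintype.card_coe, hsc]
    congr 1
    rw [Fintype.card_subtype_compl, Fintype.card_subtype_eq, Fintype.card_fin]
  rw [Finset.sum_congr rfl hfib, Finset.sum_const, Finset.card_powersetCard,
    Finset.card_univ, Fintype.card_fin, smul_eq_mul]

end Grp


/-- Local inequality (code-anticode) bound for J_q(n,w), the set of words of
length `n` and weight `w` over an alphabet with `q > 2` symbols, with the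
Hamming distance. -/
theorem local_inequality_Jq (q n w : ℕ) (hq : 3 ≤ q) (hw : w ≤ n) (D : Set ℕ)
    (C A : Finset (Fin n → Fin q))
    (hC : ∀ c ∈ C, wt c = w) (hA : ∀ a ∈ A, wt a = w)
    (hCD : ∀ c₁ ∈ C, ∀ c₂ ∈ C, c₁ ≠ c₂ → hammingDist c₁ c₂ ∈ D)
    (m : ℕ)
    (hm : IsGreatest {k : ℕ | ∃ C' : Finset (Fin n → Fin q), C' ⊆ A ∧
      (∀ c₁ ∈ C', ∀ c₂ ∈ C', c₁ ≠ c₂ → hammingDist c₁ c₂ ∈ D) ∧ C'.card = k} m) :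
    C.card * A.card ≤ m * (Nat.choose n w * (q - 1) ^ w) := by
  classical
  haveI : NeZero q := ⟨by omega⟩
  set c₀ : Fin n → Fin q := fun i => if (i : ℕ) < w then 1 else 0 with hc₀
  have h10 : (1 : Fin q) ≠ 0 := by
    intro h
    have := congrArg Fin.val h
    rw [Fin.val_one', Nat.one_mod_eq_one.2 (by omega)] at this
    simp at this
  have hwtc₀ : wt c₀ = w := by
    unfold wt
    have hfe : (Finset.univ.filter fun i : Fin n => ((c₀ i : ℕ) ≠ 0)) =
        Finset.univ.filter fun i : Fin n => (i : ℕ) < w := by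
      ext i
      simp only [Finset.mem_filter, Finset.mem_univ, true_and, ne_eq, val0iff, hc₀]
      by_cases h : (i : ℕ) < w <;> simp [h, h10]
    have hcount : (Finset.univ.filter fun i : Fin n => (i : ℕ) < w).card
        = (Finset.univ : Finset (Fin w)).card := by
      refine Finset.card_bij' (fun i hi => (⟨(i : ℕ), by simpa using hi⟩ : Fin w))
        (fun j _ => Fin.castLE hw j) (fun i hi => Finset.mem_univ _)
        (fun j _ => by simp [Fin.castLE]) (fun i hi => rfl) (fun j _ => rfl)
    rw [hfe, hcount]
    simp
  set N := (Finset.univ.filter fun g : GG n q => act g c₀ = c₀).card with hN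
  have hNpos : 0 < N := by
    rw [hN, Finset.card_pos]
    exact ⟨1, by simp [act_one]⟩
  -- |G| = |J| * N
  have hG : Fintype.card (GG n q) = (Nat.choose n w * (q - 1) ^ w) * N := by
    rw [← card_J (q := q) w hw, ← Finset.card_univ (α := GG n q),
      Finset.card_eq_sum_card_fiberwise (f := fun g : GG n q => act g c₀)
        (t := Finset.univ.filter fun x : Fin n → Fin q => wt x = w)
        (fun g _ => by simp [wt_act, hwtc₀])]
    rw [Finset.sum_congr rfl (fun a ha => ?_), Finset.sum_const, smul_eq_mul]
    have haw : wt a = w := by simpa using ha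
    simpa using card_fiber_eq c₀ a c₀ c₀ rfl (by rw [haw, hwtc₀])
  -- the double count
  have hS1 : ∑ g : GG n q, (C.filter fun c => act g c ∈ A).card = C.card * A.card * N := by
    have swap : ∑ g : GG n q, (C.filter fun c => act g c ∈ A).card
        = ∑ c ∈ C, (Finset.univ.filter fun g : GG n q => act g c ∈ A).card := by
      simp only [Finset.card_filter]
      rw [Finset.sum_comm]
    rw [swap]
    rw [Finset.sum_congr rfl (fun c hc => ?_), Finset.sum_const, smul_eq_mul, mul_assoc]
    rw [Finset.card_eq_sum_card_fiberwise (f := fun g : GG n q => act g c) (t := A)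
      (fun g hg => by simpa using hg)]
    rw [Finset.sum_congr rfl (fun a ha => ?_), Finset.sum_const, smul_eq_mul]
    have hfe : ((Finset.univ.filter fun g : GG n q => act g c ∈ A).filter
        fun g => act g c = a) = Finset.univ.filter fun g : GG n q => act g c = a := by
      ext g
      simp only [Finset.mem_filter, Finset.mem_univ, true_and, and_iff_right_iff_imp]
      intro h; rw [h]; exact ha
    rw [hfe, hN]
    exact card_fiber_eq c a c₀ c₀ (by rw [hC c hc, hwtc₀]) (by rw [hA a ha, hwtc₀])
  have hS2 : ∑ g : GG n q, (C.filter fun c => act g c ∈ A).card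
      ≤ Fintype.card (GG n q) * m := by
    rw [← Finset.card_univ (α := GG n q), ← smul_eq_mul, ← Finset.sum_const]
    apply Finset.sum_le_sum
    intro g _
    have hinj : Set.InjOn (act g) (C.filter fun c => act g c ∈ A) := fun x _ y _ h => act_inj g h
    rw [← Finset.card_image_of_injOn hinj]
    apply hm.2
    refine ⟨(C.filter fun c => act g c ∈ A).image (act g), ?_, ?_, rfl⟩
    · intro a ha
      obtain ⟨c, hc, rfl⟩ := Finset.mem_image.1 ha
      exact (Finset.mem_filter.1 hc).2
    · intro a₁ h₁ a₂ h₂ hne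
      obtain ⟨x₁, hx₁, rfl⟩ := Finset.mem_image.1 h₁
      obtain ⟨x₂, hx₂, rfl⟩ := Finset.mem_image.1 h₂
      rw [hammingDist_act]
      exact hCD x₁ (Finset.mem_filter.1 hx₁).1 x₂ (Finset.mem_filter.1 hx₂).1
        (fun h => hne (by rw [h]))
  have : C.card * A.card * N ≤ m * (Nat.choose n w * (q - 1) ^ w) * N := by
    calc C.card * A.card * N = ∑ g : GG n q, (C.filter fun c => act g c ∈ A).card := hS1.symm
      _ ≤ Fintype.card (GG n q) * m := hS2
      _ = m * (Nat.choose n w * (q - 1) ^ w) * N := by rw [hG]; ring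
  exact Nat.le_of_mul_le_mul_right this hNpos
end

section
/- If there exists a generalized Steiner system GS(t,w,n,q) with q ≥ 3 and 2 ≤ t ≤ w ≤ n, then there exists a generalized Steiner system GS(t−1, w−1, n−1, q). -/
/-- `C` is a generalized Steiner system GS(t,w,n,q): a constant-weight code of
length `n` and weight `w` over `Fin q` with minimum Hamming distance
`2(w-t)+1`, such that every word of length `n` and weight `t` is at Hamming
distance exactly `w - t` from exactly one codeword. -/
def IsGS (t w n q : ℕ) (C : Finset (Fin n → Fin q)) : Prop :=
  (∀ c ∈ C, wt c = w) ∧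
  (∀ c₁ ∈ C, ∀ c₂ ∈ C, c₁ ≠ c₂ → 2 * (w - t) + 1 ≤ hammingDist c₁ c₂) ∧
  (∀ x : Fin n → Fin q, wt x = t → ∃! c, c ∈ C ∧ hammingDist x c = w - t)

open Finset in
lemma wt_succ {m q : ℕ} (x : Fin (m+1) → Fin q) :
    wt x = wt (Fin.init x) + (if (x (Fin.last m) : ℕ) ≠ 0 then 1 else 0) := by
  simp only [wt, Finset.card_filter]
  rw [Fin.sum_univ_castSucc]
  rfl

open Finset in
lemma hdist_succ {m q : ℕ} (x y : Fin (m+1) → Fin q) :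
    hammingDist x y = hammingDist (Fin.init x) (Fin.init y)
      + (if x (Fin.last m) ≠ y (Fin.last m) then 1 else 0) := by
  simp only [hammingDist, Finset.card_filter]
  rw [Fin.sum_univ_castSucc]
  rfl

open Finset in
lemma agree_on_supp {n q t w : ℕ} (x c : Fin n → Fin q) (hx : wt x = t) (hc : wt c = w)
    (htw : t ≤ w) (hd : hammingDist x c = w - t) :
    ∀ i, (x i : ℕ) ≠ 0 → c i = x i := by
  classical
  set S : Finset (Fin n) := Finset.univ.filter fun i => (x i : ℕ) ≠ 0 with hS
  set T : Finset (Fin n) := Finset.univ.filter fun i => (c i : ℕ) ≠ 0 with hT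
  set D : Finset (Fin n) := Finset.univ.filter fun i => x i ≠ c i with hD
  have hDcard : D.card = w - t := hd
  have hsub : (T \ S) ∪ S.filter (fun i => x i ≠ c i) ⊆ D := by
    intro i hi
    simp only [hD, mem_filter, mem_univ, true_and]
    rcases Finset.mem_union.1 hi with hi | hi
    · rw [Finset.mem_sdiff] at hi
      simp only [hT, hS, mem_filter, mem_univ, true_and, not_not] at hi
      intro hxy
      exact hi.1 (hi.2 ▸ congrArg Fin.val hxy.symm)
    · exact (Finset.mem_filter.1 hi).2
  have hdisj : Disjoint (T \ S) (S.filter (fun i => x i ≠ c i)) := by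
    refine Finset.disjoint_left.2 fun i hi hi' => ?_
    exact (Finset.mem_sdiff.1 hi).2 (Finset.mem_filter.1 hi').1
  have hScard : S.card = t := hx
  have hTcard : T.card = w := hc
  have hTS : w - t ≤ (T \ S).card := by
    have h1 : T.card ≤ (T ∪ S).card := Finset.card_le_card Finset.subset_union_left
    have h2 : (T \ S).card + S.card = (T ∪ S).card := Finset.card_sdiff_add_card T S
    omega
  have hcards : (T \ S).card + (S.filter (fun i => x i ≠ c i)).card ≤ w - t := by
    calc _ = ((T \ S) ∪ S.filter (fun i => x i ≠ c i)).card :=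
          (Finset.card_union_of_disjoint hdisj).symm
      _ ≤ D.card := Finset.card_le_card hsub
      _ = w - t := hDcard
  have hzero : (S.filter (fun i => x i ≠ c i)).card = 0 := by omega
  intro i hi
  by_contra hne
  have : i ∈ S.filter (fun i => x i ≠ c i) := by
    simp only [hS, mem_filter, mem_univ, true_and]
    exact ⟨hi, fun h => hne h.symm⟩
  rw [Finset.card_eq_zero] at hzero
  simp [hzero] at this

/-- If a generalized Steiner system GS(t,w,n,q) exists with `t ≥ 2`, then a
generalized Steiner system GS(t-1, w-1, n-1, q) exists. -/
theorem gs_derived (t w n q : ℕ) (hq : 3 ≤ q) (ht : 2 ≤ t) (htw : t ≤ w) (hw : w ≤ n)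
    (h : ∃ C : Finset (Fin n → Fin q), IsGS t w n q C) :
    ∃ C' : Finset (Fin (n - 1) → Fin q), IsGS (t - 1) (w - 1) (n - 1) q C' := by
  classical
  obtain ⟨C, hCw, hCd, hCu⟩ := h
  obtain ⟨m, rfl⟩ : ∃ m, n = m + 1 := ⟨n - 1, by omega⟩
  show ∃ C' : Finset (Fin m → Fin q), IsGS (t - 1) (w - 1) m q C'
  set a : Fin q := ⟨1, by omega⟩ with ha
  have ha0 : (a : ℕ) ≠ 0 := one_ne_zero
  refine ⟨(C.filter fun c => c (Fin.last m) = a).image Fin.init, ?_, ?_, ?_⟩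
  · -- constant weight
    intro c' hc'
    obtain ⟨c, hc, rfl⟩ := Finset.mem_image.1 hc'
    obtain ⟨hcC, hcl⟩ := Finset.mem_filter.1 hc
    have h1 := wt_succ c
    rw [hcl, if_pos ha0, hCw c hcC] at h1
    omega
  · -- minimum distance
    intro c₁' h₁ c₂' h₂ hne
    obtain ⟨c₁, hc₁, rfl⟩ := Finset.mem_image.1 h₁
    obtain ⟨c₂, hc₂, rfl⟩ := Finset.mem_image.1 h₂
    obtain ⟨hc₁C, hc₁l⟩ := Finset.mem_filter.1 hc₁
    obtain ⟨hc₂C, hc₂l⟩ := Finset.mem_filter.1 hc₂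
    have hne' : c₁ ≠ c₂ := fun h => hne (by rw [h])
    have hd := hCd c₁ hc₁C c₂ hc₂C hne'
    have h1 := hdist_succ c₁ c₂
    rw [hc₁l, hc₂l, if_neg (fun h => h rfl)] at h1
    omega
  · -- covering
    intro x' hx'
    set x : Fin (m+1) → Fin q := Fin.snoc x' a with hxdef
    have hinit : Fin.init x = x' := by simp [hxdef]
    have hlast : x (Fin.last m) = a := by simp [hxdef]
    have hwx : wt x = t := by
      have h1 := wt_succ x
      rw [hlast, if_pos ha0, hinit, hx'] at h1
      omega
    obtain ⟨c, ⟨hcC, hcd⟩, huniq⟩ := hCu x hwx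
    have hclast : c (Fin.last m) = a := by
      have := agree_on_supp x c hwx (hCw c hcC) htw hcd (Fin.last m) (hlast ▸ ha0)
      rw [this, hlast]
    have hdist' : hammingDist x' (Fin.init c) = w - 1 - (t - 1) := by
      have h1 := hdist_succ x c
      rw [hlast, hclast, if_neg (fun h => h rfl), hinit] at h1
      omega
    refine ⟨Fin.init c, ⟨Finset.mem_image.2 ⟨c, Finset.mem_filter.2 ⟨hcC, hclast⟩, rfl⟩,
      hdist'⟩, ?_⟩
    rintro c' ⟨hc'mem, hc'd⟩
    obtain ⟨c₂, hc₂, rfl⟩ := Finset.mem_image.1 hc'mem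
    obtain ⟨hc₂C, hc₂l⟩ := Finset.mem_filter.1 hc₂
    have hd2 : hammingDist x c₂ = w - t := by
      have h1 := hdist_succ x c₂
      rw [hlast, hc₂l, if_neg (fun h => h rfl), hinit] at h1
      omega
    rw [huniq c₂ ⟨hc₂C, hd2⟩]
end

section
/- Suppose there exists a generalized Steiner system GS(t,w,n,q) with q ≥ 3 and 1 ≤ t ≤ w ≤ n. Then every set A of words of length n and weight w over Fin q in which any two members have Hamming distance at most 2(w−t) satisfies |A| ≤ C(n−t, w−t) · (q−1)^{w−t}. -/
open Finset

set_option linter.unusedSectionVars false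

section Aux

variable {n q : ℕ} [NeZero q]

/-- The support of a word. -/
def supp (x : Fin n → Fin q) : Finset (Fin n) := {i | x i ≠ 0}

lemma mem_supp {x : Fin n → Fin q} {i : Fin n} : i ∈ supp x ↔ x i ≠ 0 := by
  simp [supp]

lemma wt_eq (x : Fin n → Fin q) : wt x = (supp x).card := by
  unfold wt supp
  congr 1; ext i; simp [Fin.val_eq_zero_iff]

lemma hd_eq (x y : Fin n → Fin q) :
    hammingDist x y = ({i | x i ≠ y i} : Finset (Fin n)).card := rfl

lemma wt_eq_dist_zero (x : Fin n → Fin q) :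
    wt x = hammingDist x (fun _ => 0) := by
  rw [wt_eq, hd_eq]; rfl

/-- Characterization: for `x` of weight `t` and `c` of weight `w ≥ t`,
`d(x,c) = w - t` iff `x` is a subword of `c`. -/
lemma dist_eq_sub_iff {t w : ℕ} (htw : t ≤ w) {x c : Fin n → Fin q}
    (hx : wt x = t) (hc : wt c = w) :
    hammingDist x c = w - t ↔ ∀ i, x i ≠ 0 → x i = c i := by
  rw [wt_eq] at hx hc
  set S := supp x with hS
  set T := supp c with hT
  constructor
  · intro hd
    have hdecomp : ({i | x i ≠ c i} : Finset (Fin n)) =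
        (T \ S) ∪ ((S \ T) ∪ ((S ∩ T).filter fun i => x i ≠ c i)) := by
      ext i
      simp only [mem_filter, mem_univ, true_and, mem_union, mem_sdiff, mem_inter,
        hS, hT, mem_supp]
      by_cases hx0 : x i = 0 <;> by_cases hc0 : c i = 0 <;>
        simp [hx0, hc0, Ne, eq_comm]
    have hdisj1 : Disjoint (T \ S) ((S \ T) ∪ ((S ∩ T).filter fun i => x i ≠ c i)) := by
      rw [Finset.disjoint_union_right]
      constructor
      · exact disjoint_sdiff_sdiff
      · refine Finset.disjoint_left.2 fun i hi hi' => ?_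
        exact (Finset.mem_sdiff.1 hi).2 (Finset.mem_inter.1 (Finset.mem_filter.1 hi').1).1
    have hdisj2 : Disjoint (S \ T) ((S ∩ T).filter fun i => x i ≠ c i) := by
      refine Finset.disjoint_left.2 fun i hi hi' => ?_
      exact (Finset.mem_sdiff.1 hi).2 (Finset.mem_inter.1 (Finset.mem_filter.1 hi').1).2
    rw [hd_eq, hdecomp, Finset.card_union_of_disjoint hdisj1,
      Finset.card_union_of_disjoint hdisj2] at hd
    have h1 : (S ∩ T).card + (S \ T).card = S.card := Finset.card_inter_add_card_sdiff S T
    have h2 : (T ∩ S).card + (T \ S).card = T.card := Finset.card_inter_add_card_sdiff T S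
    have h3 : (T ∩ S).card = (S ∩ T).card := by rw [Finset.inter_comm]
    have hm : (S ∩ T).card ≤ t := hx ▸ (Finset.card_le_card Finset.inter_subset_left)
    have hSdT : (S \ T).card = 0 ∧ ((S ∩ T).filter fun i => x i ≠ c i).card = 0 := by
      omega
    have hsub : S ⊆ T := by
      rw [← Finset.sdiff_eq_empty_iff_subset]
      exact Finset.card_eq_zero.1 hSdT.1
    intro i hxi
    by_contra hne
    have : i ∈ (S ∩ T).filter fun i => x i ≠ c i := by
      refine Finset.mem_filter.2 ⟨Finset.mem_inter.2 ⟨?_, ?_⟩, hne⟩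
      · exact mem_supp.2 hxi
      · exact hsub (mem_supp.2 hxi)
    have := Finset.card_eq_zero.1 hSdT.2
    simp [this] at *
  · intro hagree
    have hsub : S ⊆ T := by
      intro i hi
      rw [hS, mem_supp] at hi
      rw [hT, mem_supp, ← hagree i hi]
      exact hi
    have hDeq : ({i | x i ≠ c i} : Finset (Fin n)) = T \ S := by
      ext i
      simp only [mem_filter, mem_univ, true_and, mem_sdiff, hS, hT, mem_supp]
      by_cases hx0 : x i = 0
      · simp [hx0, eq_comm]
      · simp [hx0, hagree i hx0, (hagree i hx0 ▸ hx0 : c i ≠ 0)]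
    rw [hd_eq, hDeq, Finset.card_sdiff_of_subset hsub, hx, hc]

/-- Number of words with support exactly `s`. -/
lemma card_supp_eq (s : Finset (Fin n)) :
    ((univ : Finset (Fin n → Fin q)).filter fun y => supp y = s).card
      = (q - 1) ^ s.card := by
  have hset : ((univ : Finset (Fin n → Fin q)).filter fun y => supp y = s)
      = Fintype.piFinset (fun i => if i ∈ s then ({0}ᶜ : Finset (Fin q)) else {0}) := by
    ext y
    simp only [mem_filter, mem_univ, true_and, Fintype.mem_piFinset]
    constructor
    · intro h i
      by_cases hi : i ∈ s
      · simp only [hi, if_true, Finset.mem_compl, Finset.mem_singleton]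
        rw [← h] at hi; exact mem_supp.1 hi
      · simp only [hi, if_false, Finset.mem_singleton]
        by_contra hy
        exact hi (h ▸ mem_supp.2 hy)
    · intro h
      ext i
      rw [mem_supp]
      have := h i
      by_cases hi : i ∈ s <;> simp [hi] at this ⊢ <;> simp [this]
  rw [hset, Fintype.card_piFinset]
  have : ∀ i : Fin n, (if i ∈ s then ({0}ᶜ : Finset (Fin q)) else {0}).card
      = if i ∈ s then q - 1 else 1 := by
    intro i
    by_cases hi : i ∈ s <;> simp [hi, Finset.card_compl]
  simp_rw [this]
  rw [Finset.prod_ite_mem univ s (fun _ => q - 1), Finset.univ_inter, Finset.prod_const]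


/-- Number of words of weight `k` supported inside `T`. -/
lemma card_wt_supp_subset (T : Finset (Fin n)) (k : ℕ) :
    ((univ : Finset (Fin n → Fin q)).filter
        fun y => (supp y).card = k ∧ ∀ i ∉ T, y i = 0).card
      = T.card.choose k * (q - 1) ^ k := by
  rw [Finset.card_eq_sum_card_fiberwise
    (f := fun y => supp y) (t := T.powersetCard k)
    (by
      intro y hy
      rw [mem_coe, mem_filter] at hy
      rw [mem_coe, Finset.mem_powersetCard]
      refine ⟨fun i hi => ?_, hy.2.1⟩
      by_contra hiT
      exact (mem_supp.1 hi) (hy.2.2 i hiT))]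
  have hfib : ∀ s ∈ T.powersetCard k,
      (((univ : Finset (Fin n → Fin q)).filter
        fun y => (supp y).card = k ∧ ∀ i ∉ T, y i = 0).filter
          fun y => supp y = s).card = (q - 1) ^ k := by
    intro s hs
    rw [Finset.mem_powersetCard] at hs
    have : (((univ : Finset (Fin n → Fin q)).filter
        fun y => (supp y).card = k ∧ ∀ i ∉ T, y i = 0).filter
          fun y => supp y = s)
        = (univ : Finset (Fin n → Fin q)).filter fun y => supp y = s := by
      ext y
      simp only [mem_filter, mem_univ, true_and]
      constructor
      · exact fun h => h.2
      · intro h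
        refine ⟨⟨h ▸ hs.2, fun i hi => ?_⟩, h⟩
        by_contra hy
        exact hi (hs.1 (h ▸ mem_supp.2 hy))
    rw [this, card_supp_eq, hs.2]
  rw [Finset.sum_congr rfl hfib, Finset.sum_const, Finset.card_powersetCard, smul_eq_mul]

/-- Count of weight-`t` subwords of a weight-`w` word. -/
lemma card_subwords {t w : ℕ} {c : Fin n → Fin q} (hc : wt c = w) :
    ((univ : Finset (Fin n → Fin q)).filter
        fun x => wt x = t ∧ ∀ i, x i ≠ 0 → x i = c i).card = w.choose t := by
  rw [← hc, wt_eq]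
  refine Finset.card_bij' (fun x _ => supp x)
    (fun s _ => fun i => if i ∈ s then c i else 0) ?_ ?_ ?_ ?_ |>.trans
    (Finset.card_powersetCard _ _)
  · intro x hx
    rw [mem_filter] at hx
    rw [Finset.mem_powersetCard]
    refine ⟨fun i hi => ?_, by rw [← wt_eq, hx.2.1]⟩
    rw [mem_supp] at hi ⊢
    rw [← hx.2.2 i hi]; exact hi
  · intro s hs
    rw [Finset.mem_powersetCard] at hs
    have hsupp : supp (fun i => if i ∈ s then c i else 0) = s := by
      ext i
      rw [mem_supp]
      by_cases hi : i ∈ s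
      · simpa [hi] using mem_supp.1 (hs.1 hi)
      · simp [hi]
    rw [mem_filter]
    refine ⟨mem_univ _, ?_, ?_⟩
    · rw [wt_eq, hsupp, hs.2]
    · intro i hi
      by_cases his : i ∈ s <;> simp [his] at hi ⊢
  · intro x hx
    rw [mem_filter] at hx
    funext i
    by_cases hxi : x i = 0
    · simp [mem_supp, hxi]
    · simp [mem_supp, hxi, (hx.2.2 i hxi).symm]
  · intro s hs
    rw [Finset.mem_powersetCard] at hs
    ext i
    rw [mem_supp]
    by_cases hi : i ∈ s
    · simpa [hi] using mem_supp.1 (hs.1 hi)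
    · simp [hi]

/-- Count of weight-`w` extensions of a weight-`t` word. -/
lemma card_extensions {t w : ℕ} (htw : t ≤ w) {x : Fin n → Fin q} (hx : wt x = t) :
    ((univ : Finset (Fin n → Fin q)).filter
        fun c => wt c = w ∧ ∀ i, x i ≠ 0 → x i = c i).card
      = (n - t).choose (w - t) * (q - 1) ^ (w - t) := by
  have hTcard : ((supp x)ᶜ : Finset (Fin n)).card = n - t := by
    rw [Finset.card_compl, ← wt_eq, hx, Fintype.card_fin]
  have hbij : ((univ : Finset (Fin n → Fin q)).filter
        fun c => wt c = w ∧ ∀ i, x i ≠ 0 → x i = c i).card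
      = ((univ : Finset (Fin n → Fin q)).filter
        fun y => (supp y).card = w - t ∧ ∀ i ∉ (supp x)ᶜ, y i = 0).card := by
    refine Finset.card_bij' (fun c _ => fun i => if x i = 0 then c i else 0)
      (fun y _ => fun i => if x i = 0 then y i else x i) ?_ ?_ ?_ ?_
    · intro c hc
      rw [mem_filter] at hc
      obtain ⟨-, hcw, hagr⟩ := hc
      rw [mem_filter]
      have hsub : supp x ⊆ supp c := fun i hi =>
        mem_supp.2 ((hagr i (mem_supp.1 hi)) ▸ mem_supp.1 hi)
      have hsupp2 : supp (fun i => if x i = 0 then c i else 0) = supp c \ supp x := by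
        ext i
        rw [mem_supp, Finset.mem_sdiff, mem_supp, mem_supp]
        by_cases hxi : x i = 0 <;> simp [hxi]
      simp only [mem_filter, mem_univ, true_and]
      refine ⟨?_, ?_⟩
      · show (supp fun i => if x i = 0 then c i else 0).card = w - t
        rw [hsupp2, Finset.card_sdiff_of_subset hsub, ← wt_eq, ← wt_eq, hcw, hx]
      · intro i hi
        rw [Finset.mem_compl, mem_supp, not_not] at hi
        simp [hi] at *
    · intro y hy
      rw [mem_filter] at hy
      obtain ⟨-, hyw, hy0⟩ := hy
      have hy0' : ∀ i, x i ≠ 0 → y i = 0 := by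
        intro i hi
        exact hy0 i (by rw [Finset.mem_compl, mem_supp]; simpa using hi)
      simp only [mem_filter, mem_univ, true_and]
      have hdisj : Disjoint (supp x) (supp y) := by
        refine Finset.disjoint_left.2 fun i hi hi' => ?_
        exact (mem_supp.1 hi') (hy0' i (mem_supp.1 hi))
      have hsupp : supp (fun i => if x i = 0 then y i else x i) = supp x ∪ supp y := by
        ext i
        rw [mem_supp, Finset.mem_union, mem_supp, mem_supp]
        by_cases hxi : x i = 0 <;> simp [hxi]
      refine ⟨?_, ?_⟩
      · have h1 : (supp x).card = t := by rw [← wt_eq, hx]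
        have h2 := Finset.card_union_of_disjoint hdisj
        show wt (fun i => if x i = 0 then y i else x i) = w
        rw [wt_eq, hsupp]
        omega
      · intro i hi
        simp [hi]
    · intro c hc
      rw [mem_filter] at hc
      funext i
      by_cases hxi : x i = 0
      · simp [hxi]
      · simp [hxi, (hc.2.2 i hxi).symm]
    · intro y hy
      rw [mem_filter] at hy
      funext i
      by_cases hxi : x i = 0
      · simp [hxi]
      · have : y i = 0 := hy.2.2 i (by rw [Finset.mem_compl, mem_supp]; simpa using hxi)
        simp [hxi, this]

  rw [hbij, card_wt_supp_subset, hTcard]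

lemma sum_card_filter_comm {α β : Type*} [DecidableEq α] [DecidableEq β]
    (P : Finset α) (Q : Finset β) (r : α → β → Prop) [∀ a b, Decidable (r a b)] :
    ∑ x ∈ P, (Q.filter fun y => r x y).card = ∑ y ∈ Q, (P.filter fun x => r x y).card := by
  simp_rw [Finset.card_filter]
  exact Finset.sum_comm

lemma card_filter_lt (k : ℕ) (hk : k ≤ n) :
    ((univ : Finset (Fin n)).filter fun i : Fin n => (i : ℕ) < k).card = k := by
  have hb : ((univ : Finset (Fin n)).filter fun i : Fin n => (i : ℕ) < k).card
      = (univ : Finset (Fin k)).card := by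
    refine Finset.card_bij' (fun i hi => (⟨(i : ℕ), by simpa using (mem_filter.1 hi).2⟩ : Fin k))
      (fun j _ => (⟨(j : ℕ), lt_of_lt_of_le j.2 hk⟩ : Fin n)) ?_ ?_ ?_ ?_
    · intro i hi
      exact mem_univ _
    · intro j hj
      simp only [mem_filter, mem_univ, true_and]
      exact j.2
    · intro i hi
      simp [Fin.ext_iff]
    · intro j hj
      simp [Fin.ext_iff]
  rw [hb, Finset.card_univ, Fintype.card_fin]

lemma wt_threshold (k : ℕ) (hk : k ≤ n) (hq1 : 1 < q) :
    wt (fun i : Fin n => if (i : ℕ) < k then (⟨1, hq1⟩ : Fin q) else 0) = k := by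
  unfold wt
  have : ((univ : Finset (Fin n)).filter fun i : Fin n =>
        (((if (i : ℕ) < k then (⟨1, hq1⟩ : Fin q) else 0) : Fin q) : ℕ) ≠ 0)
      = (univ : Finset (Fin n)).filter fun i : Fin n => (i : ℕ) < k := by
    ext i
    by_cases hi : (i : ℕ) < k <;> simp [hi]
  rw [this, card_filter_lt k hk]

/-- An isometry of the Hamming space preserving weights. -/
def isIso (e : Equiv.Perm (Fin n → Fin q)) : Prop :=
  (∀ z, wt (e z) = wt z) ∧ ∀ z₁ z₂, hammingDist (e z₁) (e z₂) = hammingDist z₁ z₂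

instance : DecidablePred (isIso (n := n) (q := q)) := fun e => by
  unfold isIso; infer_instance

lemma isIso_refl : isIso (Equiv.refl (Fin n → Fin q)) :=
  ⟨fun _ => rfl, fun _ _ => rfl⟩

lemma isIso_trans {e f : Equiv.Perm (Fin n → Fin q)} (he : isIso e) (hf : isIso f) :
    isIso (e.trans f) :=
  ⟨fun z => (hf.1 (e z)).trans (he.1 z), fun z₁ z₂ => (hf.2 (e z₁) (e z₂)).trans (he.2 z₁ z₂)⟩

lemma isIso_symm {e : Equiv.Perm (Fin n → Fin q)} (he : isIso e) : isIso e.symm := by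
  constructor
  · intro z
    have h' := he.1 (e.symm z)
    rw [e.apply_symm_apply] at h'
    exact h'.symm
  · intro z₁ z₂
    have h' := he.2 (e.symm z₁) (e.symm z₂)
    rw [e.apply_symm_apply, e.apply_symm_apply] at h'
    exact h'.symm

lemma card_filter_equiv (σ : Equiv.Perm (Fin n)) (p : Fin n → Prop) [DecidablePred p] :
    ((univ : Finset (Fin n)).filter fun i => p (σ i)).card
      = ((univ : Finset (Fin n)).filter p).card := by
  refine Finset.card_bij' (fun i _ => σ i) (fun j _ => σ.symm j) ?_ ?_ ?_ ?_ <;>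
    simp [Finset.mem_filter]

/-- Transitivity: any two words of the same weight are related by a
weight-preserving isometry. -/
lemma exists_iso {k : ℕ} {a c : Fin n → Fin q} (ha : wt a = k) (hc : wt c = k) :
    ∃ e : Equiv.Perm (Fin n → Fin q), isIso e ∧ e a = c := by
  classical
  have hcard : (supp a).card = (supp c).card := by rw [← wt_eq, ← wt_eq, ha, hc]
  have h1 : Fintype.card {i // i ∈ supp a} = Fintype.card {i // i ∈ supp c} := by
    simpa [Fintype.card_coe] using hcard
  have h2 : Fintype.card {i // ¬ i ∈ supp a} = Fintype.card {i // ¬ i ∈ supp c} := by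
    rw [Fintype.card_subtype_compl, Fintype.card_subtype_compl, h1]
  let eS := Fintype.equivOfCardEq h1
  let eC := Fintype.equivOfCardEq h2
  let σ : Equiv.Perm (Fin n) :=
    (Equiv.sumCompl (· ∈ supp a)).symm.trans ((eS.sumCongr eC).trans (Equiv.sumCompl (· ∈ supp c)))
  have hσ : ∀ j, σ j ∈ supp c ↔ j ∈ supp a := by
    intro j
    by_cases hj : j ∈ supp a
    · simp only [σ, Equiv.trans_apply, Equiv.sumCompl_symm_apply_of_pos hj,
        Equiv.sumCongr_apply, Sum.map_inl, Equiv.sumCompl_apply_inl]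
      exact iff_of_true (eS ⟨j, hj⟩).2 hj
    · simp only [σ, Equiv.trans_apply, Equiv.sumCompl_symm_apply_of_neg hj,
        Equiv.sumCongr_apply, Sum.map_inr, Equiv.sumCompl_apply_inr]
      exact iff_of_false (eC ⟨j, hj⟩).2 hj
  have hσ' : ∀ i : Fin n, (a (σ.symm i) = 0 ↔ c i = 0) := by
    intro i
    have h := hσ (σ.symm i)
    rw [Equiv.apply_symm_apply, mem_supp, mem_supp] at h
    exact not_iff_not.1 h.symm
  let π : Fin n → Equiv.Perm (Fin q) := fun i => Equiv.swap (a (σ.symm i)) (c i)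
  have hπ0 : ∀ i, π i 0 = 0 := by
    intro i
    by_cases hc0 : c i = 0
    · have ha0 : a (σ.symm i) = 0 := (hσ' i).2 hc0
      simp [π, ha0, hc0]
    · have ha0 : a (σ.symm i) ≠ 0 := fun h' => hc0 ((hσ' i).1 h')
      exact Equiv.swap_apply_of_ne_of_ne (Ne.symm ha0) (Ne.symm hc0)
  let e : Equiv.Perm (Fin n → Fin q) :=
    { toFun := fun z i => π i (z (σ.symm i))
      invFun := fun z j => (π (σ j)).symm (z (σ j))
      left_inv := by
        intro z
        funext j
        simp [σ.symm_apply_apply]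
      right_inv := by
        intro z
        funext i
        simp [σ.apply_symm_apply] }
  have hdist : ∀ z₁ z₂, hammingDist (e z₁) (e z₂) = hammingDist z₁ z₂ := by
    intro z₁ z₂
    show hammingDist (fun i => π i (z₁ (σ.symm i))) (fun i => π i (z₂ (σ.symm i)))
        = hammingDist z₁ z₂
    rw [hd_eq, hd_eq]
    have hfe : ((univ : Finset (Fin n)).filter
          fun i => π i (z₁ (σ.symm i)) ≠ π i (z₂ (σ.symm i)))
        = (univ : Finset (Fin n)).filter fun i => z₁ (σ.symm i) ≠ z₂ (σ.symm i) := by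
      ext i
      simp [Equiv.apply_eq_iff_eq]
    rw [hfe]
    exact card_filter_equiv σ.symm (fun j => z₁ j ≠ z₂ j)
  have h0 : e (fun _ => 0) = (fun _ => 0) := funext hπ0
  have hwt : ∀ z, wt (e z) = wt z := by
    intro z
    have hz := hdist z (fun _ => 0)
    rw [h0] at hz
    rw [wt_eq_dist_zero, wt_eq_dist_zero]
    exact hz
  refine ⟨e, ⟨hwt, hdist⟩, ?_⟩
  funext i
  show π i (a (σ.symm i)) = c i
  exact Equiv.swap_apply_left _ _

/-- All fibers of the evaluation map on the isometry group have the same size. -/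
lemma fiber_const {k : ℕ} {a₀ a c : Fin n → Fin q} (h₀ : wt a₀ = k) (ha : wt a = k)
    (hc : wt c = k) :
    (((univ : Finset (Equiv.Perm (Fin n → Fin q))).filter isIso).filter
        fun e => e a = c).card
      = (((univ : Finset (Equiv.Perm (Fin n → Fin q))).filter isIso).filter
        fun e => e a₀ = a₀).card := by
  obtain ⟨h₁, hh₁, h₁a⟩ := exists_iso h₀ ha
  obtain ⟨h₂, hh₂, h₂a⟩ := exists_iso h₀ hc
  refine Finset.card_bij' (fun g _ => h₁.trans (g.trans h₂.symm))
    (fun g _ => h₁.symm.trans (g.trans h₂)) ?_ ?_ ?_ ?_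
  · intro g hg
    simp only [mem_filter, mem_univ, true_and] at hg ⊢
    refine ⟨isIso_trans hh₁ (isIso_trans hg.1 (isIso_symm hh₂)), ?_⟩
    show h₂.symm (g (h₁ a₀)) = a₀
    rw [h₁a, hg.2, ← h₂a, Equiv.symm_apply_apply]
  · intro g hg
    simp only [mem_filter, mem_univ, true_and] at hg ⊢
    refine ⟨isIso_trans (isIso_symm hh₁) (isIso_trans hg.1 hh₂), ?_⟩
    show h₂ (g (h₁.symm a)) = c
    rw [← h₁a, Equiv.symm_apply_apply, hg.2]
    exact h₂a
  · intro g _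
    ext z
    simp
  · intro g _
    ext z
    simp

end Aux

/-- If a generalized Steiner system GS(t,w,n,q) exists, then every anticode of
words of length `n` and weight `w` over `Fin q` with Hamming diameter at most
`2(w-t)` has size at most `C(n-t, w-t) * (q-1)^(w-t)`. -/
theorem gs_max_anticode (t w n q : ℕ) (hq : 3 ≤ q) (ht : 1 ≤ t) (htw : t ≤ w)
    (hw : w ≤ n) (h : ∃ C : Finset (Fin n → Fin q), IsGS t w n q C)
    (A : Finset (Fin n → Fin q)) (hA : ∀ a ∈ A, wt a = w)
    (hAdiam : ∀ a₁ ∈ A, ∀ a₂ ∈ A, hammingDist a₁ a₂ ≤ 2 * (w - t)) :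
    A.card ≤ Nat.choose (n - t) (w - t) * (q - 1) ^ (w - t) := by
  classical
  haveI : NeZero q := ⟨by omega⟩
  obtain ⟨C, hCw, hCd, hCu⟩ := h
  set T := (univ : Finset (Fin n → Fin q)).filter (fun x => wt x = t) with hT
  set W := (univ : Finset (Fin n → Fin q)).filter (fun x => wt x = w) with hW
  -- Each weight-w word has exactly `w.choose t` weight-t subwords.
  have k1 : ∀ c : Fin n → Fin q, wt c = w →
      (T.filter fun x => hammingDist x c = w - t).card = w.choose t := by
    intro c hc
    rw [hT, Finset.filter_filter]
    have heq : ((univ : Finset (Fin n → Fin q)).filter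
          fun x => wt x = t ∧ hammingDist x c = w - t)
        = (univ : Finset (Fin n → Fin q)).filter
          fun x => wt x = t ∧ ∀ i, x i ≠ 0 → x i = c i :=
      Finset.filter_congr fun x _ => by
        exact and_congr_right fun hx => dist_eq_sub_iff htw hx hc
    rw [heq, card_subwords hc]
  -- Each weight-t word has exactly `(n-t).choose (w-t) * (q-1)^(w-t)` weight-w extensions.
  have k2 : ∀ x : Fin n → Fin q, wt x = t →
      (W.filter fun c => hammingDist x c = w - t).card
        = (n - t).choose (w - t) * (q - 1) ^ (w - t) := by
    intro x hx
    rw [hW, Finset.filter_filter]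
    have heq : ((univ : Finset (Fin n → Fin q)).filter
          fun c => wt c = w ∧ hammingDist x c = w - t)
        = (univ : Finset (Fin n → Fin q)).filter
          fun c => wt c = w ∧ ∀ i, x i ≠ 0 → x i = c i :=
      Finset.filter_congr fun c _ => by
        exact and_congr_right fun hc => dist_eq_sub_iff htw hx hc
    rw [heq, card_extensions htw hx]
  -- By the Steiner property, the code covers each weight-t word exactly once.
  have k3 : T.card = C.card * w.choose t := by
    have hTcount : ∀ x ∈ T, (C.filter fun c => hammingDist x c = w - t).card = 1 := by
      intro x hx
      rw [hT, mem_filter] at hx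
      obtain ⟨c, hcprop, hcu⟩ := hCu x hx.2
      rw [Finset.card_eq_one]
      refine ⟨c, ?_⟩
      ext c'
      simp only [mem_filter, Finset.mem_singleton]
      constructor
      · intro hc'
        exact hcu c' hc'
      · rintro rfl
        exact ⟨hcprop.1, hcprop.2⟩
    calc T.card = ∑ x ∈ T, 1 := by rw [Finset.sum_const, smul_eq_mul, mul_one]
      _ = ∑ x ∈ T, (C.filter fun c => hammingDist x c = w - t).card :=
          Finset.sum_congr rfl fun x hx => (hTcount x hx).symm
      _ = ∑ c ∈ C, (T.filter fun x => hammingDist x c = w - t).card :=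
          sum_card_filter_comm T C (fun x c => hammingDist x c = w - t)
      _ = ∑ c ∈ C, w.choose t := Finset.sum_congr rfl fun c hc => k1 c (hCw c hc)
      _ = C.card * w.choose t := by rw [Finset.sum_const, smul_eq_mul]
  -- Double counting pairs (x, c) with x a weight-t subword of a weight-w word c.
  have k4 : W.card * w.choose t = T.card * ((n - t).choose (w - t) * (q - 1) ^ (w - t)) := by
    calc W.card * w.choose t = ∑ c ∈ W, w.choose t := by rw [Finset.sum_const, smul_eq_mul]
      _ = ∑ c ∈ W, (T.filter fun x => hammingDist x c = w - t).card :=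
          Finset.sum_congr rfl fun c hc =>
            (k1 c (by rw [hW, mem_filter] at hc; exact hc.2)).symm
      _ = ∑ x ∈ T, (W.filter fun c => hammingDist x c = w - t).card :=
          (sum_card_filter_comm T W (fun x c => hammingDist x c = w - t)).symm
      _ = ∑ x ∈ T, (n - t).choose (w - t) * (q - 1) ^ (w - t) :=
          Finset.sum_congr rfl fun x hx =>
            k2 x (by rw [hT, mem_filter] at hx; exact hx.2)
      _ = T.card * ((n - t).choose (w - t) * (q - 1) ^ (w - t)) := by
          rw [Finset.sum_const, smul_eq_mul]
  have hTpos : 0 < T.card := by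
    refine Finset.card_pos.2 ⟨fun i : Fin n => if (i : ℕ) < t then (⟨1, by omega⟩ : Fin q) else 0, ?_⟩
    rw [hT, mem_filter]
    exact ⟨mem_univ _, wt_threshold t (le_trans htw hw) (by omega)⟩
  -- The group-averaging (code-anticode) bound: |A| * |C| ≤ |W|.
  have k6 : A.card * C.card ≤ W.card := by
    set GFin := (univ : Finset (Equiv.Perm (Fin n → Fin q))).filter isIso with hGF
    set a₀ : Fin n → Fin q := (fun i => if (i : ℕ) < w then (⟨1, by omega⟩ : Fin q) else 0) with ha₀def
    have ha₀ : wt a₀ = w := wt_threshold w hw (by omega)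
    set K := (GFin.filter fun e => e a₀ = a₀).card with hK
    have hKpos : 0 < K := by
      refine Finset.card_pos.2 ⟨Equiv.refl _, ?_⟩
      rw [mem_filter, hGF, mem_filter]
      exact ⟨⟨mem_univ _, isIso_refl⟩, rfl⟩
    have hGFcard : GFin.card = W.card * K := by
      rw [Finset.card_eq_sum_card_fiberwise (f := fun e => e a₀) (t := W)
        (fun e he => by
          rw [hW, mem_coe, mem_filter]
          rw [hGF, mem_coe, mem_filter] at he
          exact ⟨mem_univ _, (he.2.1 a₀).trans ha₀⟩)]
      calc ∑ x ∈ W, (GFin.filter fun e => e a₀ = x).card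
          = ∑ x ∈ W, K := Finset.sum_congr rfl fun x hx =>
            fiber_const ha₀ ha₀ (by rw [hW, mem_filter] at hx; exact hx.2)
        _ = W.card * K := by rw [Finset.sum_const, smul_eq_mul]
    have hS1 : ∑ a ∈ A, ∑ c ∈ C, (GFin.filter fun e => e a = c).card
        = (A.card * C.card) * K := by
      calc ∑ a ∈ A, ∑ c ∈ C, (GFin.filter fun e => e a = c).card
          = ∑ a ∈ A, ∑ c ∈ C, K := Finset.sum_congr rfl fun a ha' =>
            Finset.sum_congr rfl fun c hc => fiber_const ha₀ (hA a ha') (hCw c hc)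
        _ = (A.card * C.card) * K := by
            rw [Finset.sum_const, Finset.sum_const, smul_eq_mul, smul_eq_mul, mul_assoc]
    have hS2 : ∑ a ∈ A, ∑ c ∈ C, (GFin.filter fun e => e a = c).card ≤ GFin.card := by
      have hsum : ∀ a : Fin n → Fin q, ∑ c ∈ C, (GFin.filter fun e => e a = c).card
          = ∑ e ∈ GFin, if e a ∈ C then 1 else 0 := by
        intro a
        calc ∑ c ∈ C, (GFin.filter fun e => e a = c).card
            = ∑ c ∈ C, ∑ e ∈ GFin, if e a = c then 1 else 0 := by
              simp_rw [Finset.card_filter]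
          _ = ∑ e ∈ GFin, ∑ c ∈ C, if e a = c then 1 else 0 := Finset.sum_comm
          _ = ∑ e ∈ GFin, if e a ∈ C then 1 else 0 :=
              Finset.sum_congr rfl fun e _ => Finset.sum_ite_eq C (e a) fun _ => 1
      calc ∑ a ∈ A, ∑ c ∈ C, (GFin.filter fun e => e a = c).card
          = ∑ a ∈ A, ∑ e ∈ GFin, if e a ∈ C then 1 else 0 :=
            Finset.sum_congr rfl fun a _ => hsum a
        _ = ∑ e ∈ GFin, ∑ a ∈ A, if e a ∈ C then 1 else 0 := Finset.sum_comm
        _ ≤ ∑ e ∈ GFin, 1 := by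
            refine Finset.sum_le_sum fun e he => ?_
            rw [← Finset.card_filter]
            refine Finset.card_le_one.2 fun a₁ h₁ a₂ h₂ => ?_
            rw [mem_filter] at h₁ h₂
            by_contra hne
            have hiso : isIso e := by
              rw [hGF, mem_filter] at he
              exact he.2
            have hne' : e a₁ ≠ e a₂ := fun hEq => hne (e.injective hEq)
            have hd := hCd _ h₁.2 _ h₂.2 hne'
            rw [hiso.2 a₁ a₂] at hd
            have hdiam := hAdiam a₁ h₁.1 a₂ h₂.1
            omega
        _ = GFin.card := by rw [Finset.sum_const, smul_eq_mul, mul_one]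
    have hfinal : (A.card * C.card) * K ≤ W.card * K := by
      rw [← hS1, ← hGFcard]
      exact hS2
    exact Nat.le_of_mul_le_mul_right hfinal hKpos
  -- Combine everything.
  have hchain : A.card * T.card
      ≤ T.card * ((n - t).choose (w - t) * (q - 1) ^ (w - t)) := by
    calc A.card * T.card = A.card * (C.card * w.choose t) := by rw [k3]
      _ = (A.card * C.card) * w.choose t := by ring
      _ ≤ W.card * w.choose t := Nat.mul_le_mul_right _ k6
      _ = T.card * ((n - t).choose (w - t) * (q - 1) ^ (w - t)) := k4
  rw [mul_comm] at hchain
  exact Nat.le_of_mul_le_mul_left hchain hTpos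
end
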